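/- arXiv:0710.1598 — 6 statements merged into one kernel-verified Lean document; each statement's English description precedes it below -/
import Mathlib

section
/- Let N ≥ 2, let (ℓ, n, m_2, …, m_{N−1}) be a null frame of ℝ^N, and for z ∈ ℝ^{N−2} consider the null rotation about ℓ: ℓ̂ = ℓ, m̂_i = m_i + z_i ℓ, n̂ = n − Σ_i z_i m_i − ½(Σ_i z_i²) ℓ. Then for every p-linear form T on ℝ^N, each frame component T̂_{A_1…A_p} in the new frame equals T_{A_1…A_p} plus a finite linear combination, with coefficients polynomial in z, of frame components of T of boost weight strictly greater than the boost weight of T_{A_1…A_p}. In particular, the components whose boost weight equals the boost order of T (the leading terms) are unchanged, and the boost order of T with respect to the frame is invariant under null rotations about ℓ. -/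
/-- The Minkowski symmetric bilinear form of signature `(-,+,…,+)` on `ℝ^N`. -/
def eta {N : ℕ} (x y : Fin N → ℝ) : ℝ :=
  ∑ a : Fin N, (if (a : ℕ) = 0 then -(x a * y a) else x a * y a)

/-- A null frame `(ℓ, n, m_2, …, m_{N-1})` of `ℝ^N`: a basis consisting of two null
vectors `ℓ = f 0`, `n = f 1` with `η(ℓ,n) = 1` and spacelike vectors `m_i = f i`
(`2 ≤ i`) orthonormal and orthogonal to `ℓ` and `n`. -/
def IsNullFrame {N : ℕ} [NeZero N] (f : Fin N → Fin N → ℝ) : Prop :=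
  LinearIndependent ℝ f ∧
  eta (f 0) (f 0) = 0 ∧ eta (f 1) (f 1) = 0 ∧ eta (f 0) (f 1) = 1 ∧
  (∀ i j : Fin N, 2 ≤ (i : ℕ) → 2 ≤ (j : ℕ) →
      eta (f i) (f j) = if i = j then 1 else 0) ∧
  (∀ i : Fin N, 2 ≤ (i : ℕ) → eta (f 0) (f i) = 0 ∧ eta (f 1) (f i) = 0)

/-- Boost weight of a frame index: `b_0 = 1`, `b_1 = -1`, `b_i = 0` for spatial `i`. -/
def bw {N : ℕ} (A : Fin N) : ℤ :=
  if (A : ℕ) = 0 then 1 else if (A : ℕ) = 1 then -1 else 0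

open scoped Classical in
/-- The boost order of a `p`-linear form `T` with respect to the frame `f`: the maximum
boost weight over all nonvanishing frame components (`⊥`, i.e. `-∞`, if all vanish). -/
noncomputable def boostOrder {N : ℕ} (p : ℕ)
    (T : MultilinearMap ℝ (fun _ : Fin p => (Fin N → ℝ)) ℝ)
    (f : Fin N → Fin N → ℝ) : WithBot ℤ :=
  Finset.univ.sup fun A : Fin p → Fin N =>
    if T (fun k => f (A k)) = 0 then ⊥ else ((∑ k, bw (A k) : ℤ) : WithBot ℤ)

/-- The spatial index set `{2, …, N-1}`. -/
def sp (N : ℕ) : Finset (Fin N) := Finset.univ.filter (fun i => 2 ≤ (i : ℕ))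

/-- The null rotation about `ℓ` with parameters `z`:
`ℓ̂ = ℓ`, `m̂ᵢ = mᵢ + zᵢ ℓ`, `n̂ = n - ∑ᵢ zᵢ mᵢ - ½(∑ᵢ zᵢ²) ℓ`. -/
noncomputable def rotL {N : ℕ} [NeZero N] (f : Fin N → Fin N → ℝ) (z : Fin N → ℝ) :
    Fin N → Fin N → ℝ := fun A =>
  if (A : ℕ) = 0 then f 0
  else if (A : ℕ) = 1 then
    f 1 - (∑ i ∈ sp N, z i • f i) - ((1/2) * ∑ i ∈ sp N, (z i)^2) • f 0
  else f A + z A • f 0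

noncomputable def Dp (N : ℕ) : Fin N → Fin N → MvPolynomial (Fin N) ℝ := fun A B =>
  if (A : ℕ) = 0 then 0
  else if (A : ℕ) = 1 then
    (if (B : ℕ) = 0 then -(MvPolynomial.C (1/2) * ∑ i ∈ sp N, (MvPolynomial.X i)^2)
     else if (B : ℕ) = 1 then 0 else -(MvPolynomial.X B))
  else (if (B : ℕ) = 0 then MvPolynomial.X A else 0)

lemma Dp_eq_zero {N : ℕ} (A B : Fin N) (h : ¬ bw A < bw B) : Dp N A B = 0 := by
  unfold Dp
  unfold bw at h
  split_ifs at h ⊢ <;> first | rfl | omega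

noncomputable def Ep (N : ℕ) (A B : Fin N) : MvPolynomial (Fin N) ℝ :=
  (if B = A then 1 else 0) + Dp N A B

lemma rotL_eq {N : ℕ} [NeZero N] (hN : 2 ≤ N) (f : Fin N → Fin N → ℝ) (z : Fin N → ℝ)
    (A : Fin N) :
    rotL f z A = ∑ B : Fin N, (MvPolynomial.eval z (Ep N A B)) • f B := by
  have h1 : ((1 : Fin N) : ℕ) = 1 := by
    rw [Fin.val_one']; exact Nat.mod_eq_of_lt hN
  have hsplit : ∀ g : Fin N → (Fin N → ℝ),
      ∑ B : Fin N, g B = ∑ B ∈ sp N, g B + (g 0 + g 1) := by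
    intro g
    rw [← Finset.sum_filter_add_sum_filter_not Finset.univ (fun B : Fin N => 2 ≤ (B : ℕ)) g]
    congr 1
    have : Finset.univ.filter (fun B : Fin N => ¬ 2 ≤ (B : ℕ)) = {0, 1} := by
      ext B
      simp only [Finset.mem_filter, Finset.mem_univ, true_and, Finset.mem_insert,
        Finset.mem_singleton, Fin.ext_iff, Fin.val_zero, h1]
      omega
    rw [this, Finset.sum_insert (by simp only [Finset.mem_singleton, Fin.ext_iff, Fin.val_zero, h1]; omega), Finset.sum_singleton]
  simp only [Ep, map_add, add_smul, Finset.sum_add_distrib]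
  have hdelta : ∑ B : Fin N,
      (MvPolynomial.eval z (if B = A then 1 else 0)) • f B = f A := by
    rw [Finset.sum_eq_single A]
    · simp
    · intro b _ hb; simp [hb]
    · simp
  rw [hdelta]
  unfold rotL Dp
  split_ifs with hA0 hA1
  · have : A = 0 := Fin.ext (by simp [hA0])
    subst this
    simp
  · have : A = 1 := Fin.ext (by rw [h1]; exact hA1)
    subst this
    rw [hsplit]
    have e0 : (MvPolynomial.eval z
        (if ((0 : Fin N) : ℕ) = 0 then -(MvPolynomial.C (1/2 : ℝ) * ∑ i ∈ sp N, (MvPolynomial.X i)^2)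
         else if ((0 : Fin N) : ℕ) = 1 then 0 else -(MvPolynomial.X (0 : Fin N)))) • f 0
        = -(((1/2) * ∑ i ∈ sp N, (z i)^2) • f 0) := by
      simp [neg_smul]
    have e1 : (MvPolynomial.eval z
        (if ((1 : Fin N) : ℕ) = 0 then -(MvPolynomial.C (1/2 : ℝ) * ∑ i ∈ sp N, (MvPolynomial.X i)^2)
         else if ((1 : Fin N) : ℕ) = 1 then 0 else -(MvPolynomial.X (1 : Fin N)))) • f 1
        = 0 := by
      rw [if_neg (by rw [h1]; exact one_ne_zero), if_pos h1]
      simp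
    rw [e0, e1]
    have esp : ∀ B ∈ sp N, (MvPolynomial.eval z
        (if (B : ℕ) = 0 then -(MvPolynomial.C (1/2 : ℝ) * ∑ i ∈ sp N, (MvPolynomial.X i)^2)
         else if (B : ℕ) = 1 then 0 else -(MvPolynomial.X B))) • f B
        = -(z B • f B) := by
      intro B hB
      have hB2 : 2 ≤ (B : ℕ) := by simpa [sp] using hB
      rw [if_neg (by omega), if_neg (by omega)]
      simp [neg_smul]
    rw [Finset.sum_congr rfl esp, Finset.sum_neg_distrib]
    abel
  · rw [Finset.sum_eq_single (0 : Fin N)]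
    · simp
    · intro b _ hb
      rw [if_neg (Fin.val_ne_zero_iff.mpr hb)]
      simp
    · simp

lemma expandT {N p : ℕ} [NeZero N] (hN : 2 ≤ N)
    (f : Fin N → Fin N → ℝ) (T : MultilinearMap ℝ (fun _ : Fin p => (Fin N → ℝ)) ℝ)
    (z : Fin N → ℝ) (A : Fin p → Fin N) :
    T (fun k => rotL f z (A k)) =
      ∑ r : Fin p → Fin N,
        (MvPolynomial.eval z (∏ k, Ep N (A k) (r k))) * T (fun k => f (r k)) := by
  have h : (fun k => rotL f z (A k)) =
      fun k => ∑ B : Fin N, (MvPolynomial.eval z (Ep N (A k) B)) • f B :=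
    funext fun k => rotL_eq hN f z (A k)
  rw [h, T.map_sum (fun k B => (MvPolynomial.eval z (Ep N (A k) B)) • f B)]
  refine Finset.sum_congr rfl fun r _ => ?_
  rw [T.map_smul_univ, map_prod]
  simp [smul_eq_mul]

lemma key {N p : ℕ} [NeZero N] (hN : 2 ≤ N)
    (f : Fin N → Fin N → ℝ) (T : MultilinearMap ℝ (fun _ : Fin p => (Fin N → ℝ)) ℝ)
    (A : Fin p → Fin N) (z : Fin N → ℝ) :
    T (fun k => rotL f z (A k)) = T (fun k => f (A k)) +
      ∑ B ∈ Finset.univ.filter (fun B : Fin p → Fin N =>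
          (∑ k, bw (A k)) < ∑ k, bw (B k)),
        (MvPolynomial.eval z (∏ k, Ep N (A k) (B k))) * T (fun k => f (B k)) := by
  classical
  rw [expandT hN f T z A]
  rw [← Finset.sum_subset (Finset.subset_univ
    (insert A (Finset.univ.filter (fun B : Fin p → Fin N =>
          (∑ k, bw (A k)) < ∑ k, bw (B k)))))]
  · rw [Finset.sum_insert (by simp)]
    congr 1
    have : ∏ k, Ep N (A k) (A k) = 1 := by
      apply Finset.prod_eq_one
      intro k _
      simp [Ep, Dp_eq_zero _ _ (lt_irrefl _)]
    rw [this]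
    simp
  · intro r _ hr
    simp only [Finset.mem_insert, Finset.mem_filter, Finset.mem_univ, true_and,
      not_or, not_lt] at hr
    obtain ⟨hrA, hle⟩ := hr
    -- there must be k with r k ≠ A k and ¬ bw (A k) < bw (r k)
    by_cases hall : ∀ k, r k = A k ∨ bw (A k) < bw (r k)
    · exfalso
      have hlt : (∑ k, bw (A k)) < ∑ k, bw (r k) := by
        apply Finset.sum_lt_sum
        · intro k _
          rcases hall k with h | h
          · rw [h]
          · exact le_of_lt h
        · obtain ⟨k, hk⟩ := Function.ne_iff.mp hrA
          exact ⟨k, Finset.mem_univ k, (hall k).resolve_left hk⟩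
      omega
    · push_neg at hall
      obtain ⟨k, hk1, hk2⟩ := hall
      have : Ep N (A k) (r k) = 0 := by
        simp [Ep, hk1, Dp_eq_zero _ _ (not_lt.mpr hk2)]
      rw [Finset.prod_eq_zero (Finset.mem_univ k) this]
      simp

open scoped Classical in
noncomputable def boostOrder' {N : ℕ} (p : ℕ)
    (T : MultilinearMap ℝ (fun _ : Fin p => (Fin N → ℝ)) ℝ)
    (f : Fin N → Fin N → ℝ) : WithBot ℤ :=
  Finset.univ.sup fun A : Fin p → Fin N =>
    if T (fun k => f (A k)) = 0 then ⊥ else ((∑ k, bw (A k) : ℤ) : WithBot ℤ)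

open scoped Classical in
lemma le_boostOrder' {N p : ℕ} (T : MultilinearMap ℝ (fun _ : Fin p => (Fin N → ℝ)) ℝ)
    (f : Fin N → Fin N → ℝ) (B : Fin p → Fin N) (h : T (fun k => f (B k)) ≠ 0) :
    ((∑ k, bw (B k) : ℤ) : WithBot ℤ) ≤ boostOrder' p T f := by
  have := Finset.le_sup (f := fun A : Fin p → Fin N =>
    if T (fun k => f (A k)) = 0 then (⊥ : WithBot ℤ) else ((∑ k, bw (A k) : ℤ) : WithBot ℤ))
    (Finset.mem_univ B)
  simpa [boostOrder', h] using this

lemma boostOrder'_rot_le {N p : ℕ} [NeZero N] (hN : 2 ≤ N)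
    (f : Fin N → Fin N → ℝ) (T : MultilinearMap ℝ (fun _ : Fin p => (Fin N → ℝ)) ℝ)
    (z : Fin N → ℝ) :
    boostOrder' p T (rotL f z) ≤ boostOrder' p T f := by
  classical
  apply Finset.sup_le
  intro A _
  split_ifs with h
  · exact bot_le
  · -- T (rotL ∘ A) ≠ 0
    rw [key hN f T A z] at h
    by_cases h0 : T (fun k => f (A k)) = 0
    · rw [h0, zero_add] at h
      obtain ⟨B, hB, hB0⟩ := Finset.exists_ne_zero_of_sum_ne_zero h
      simp only [Finset.mem_filter, Finset.mem_univ, true_and] at hB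
      have hTB : T (fun k => f (B k)) ≠ 0 := fun hh => hB0 (by rw [hh, mul_zero])
      exact le_trans (by exact_mod_cast le_of_lt hB) (le_boostOrder' T f B hTB)
    · exact le_boostOrder' T f A h0

lemma rotL_apply_zero {N : ℕ} [NeZero N] (f : Fin N → Fin N → ℝ) (z : Fin N → ℝ) :
    rotL f z 0 = f 0 := by simp [rotL]

lemma rotL_apply_one {N : ℕ} [NeZero N] (hN : 2 ≤ N) (f : Fin N → Fin N → ℝ)
    (z : Fin N → ℝ) :
    rotL f z 1 = f 1 - (∑ i ∈ sp N, z i • f i) - ((1/2) * ∑ i ∈ sp N, (z i)^2) • f 0 := by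
  have h1 : ((1 : Fin N) : ℕ) = 1 := by
    rw [Fin.val_one']; exact Nat.mod_eq_of_lt hN
  rw [rotL, if_neg (by rw [h1]; exact one_ne_zero), if_pos h1]

lemma rotL_apply_sp {N : ℕ} [NeZero N] (f : Fin N → Fin N → ℝ) (z : Fin N → ℝ)
    (A : Fin N) (hA : 2 ≤ (A : ℕ)) :
    rotL f z A = f A + z A • f 0 := by
  rw [rotL, if_neg (by omega), if_neg (by omega)]

lemma rotL_rotL_neg {N : ℕ} [NeZero N] (hN : 2 ≤ N)
    (f : Fin N → Fin N → ℝ) (z : Fin N → ℝ) :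
    rotL (rotL f z) (-z) = f := by
  have h1 : ((1 : Fin N) : ℕ) = 1 := by
    rw [Fin.val_one']; exact Nat.mod_eq_of_lt hN
  funext A
  by_cases hA0 : (A : ℕ) = 0
  · have : A = 0 := Fin.ext (by simp [hA0])
    subst this
    rw [rotL_apply_zero, rotL_apply_zero]
  by_cases hA1 : (A : ℕ) = 1
  · have : A = 1 := Fin.ext (by rw [h1]; exact hA1)
    subst this
    rw [rotL_apply_one hN, rotL_apply_one hN, rotL_apply_zero]
    have hmid : ∑ i ∈ sp N, (-z) i • (rotL f z i) =
        -(∑ i ∈ sp N, z i • f i) - (∑ i ∈ sp N, (z i)^2) • f 0 := by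
      rw [← Finset.sum_neg_distrib, Finset.sum_smul, ← Finset.sum_sub_distrib]
      refine Finset.sum_congr rfl fun i hi => ?_
      have hi2 : 2 ≤ (i : ℕ) := by simpa [sp] using hi
      rw [rotL_apply_sp f z i hi2]
      simp [smul_add, smul_smul, sq, neg_smul]
      abel
    have hsq : ∑ i ∈ sp N, ((-z) i)^2 = ∑ i ∈ sp N, (z i)^2 := by
      refine Finset.sum_congr rfl fun i _ => by simp
    rw [hmid, hsq]
    have hQ : (∑ i ∈ sp N, (z i)^2) • f 0 =
        ((1/2) * ∑ i ∈ sp N, (z i)^2) • f 0 + ((1/2) * ∑ i ∈ sp N, (z i)^2) • f 0 := by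
      rw [← add_smul]; ring_nf
    rw [hQ]
    abel
  · rw [rotL_apply_sp _ _ A (by omega), rotL_apply_sp f z A (by omega), rotL_apply_zero]
    simp only [Pi.neg_apply, neg_smul]
    abel

lemma bo_eq {N p : ℕ} (T : MultilinearMap ℝ (fun _ : Fin p => (Fin N → ℝ)) ℝ)
    (f : Fin N → Fin N → ℝ) : boostOrder p T f = boostOrder' p T f := rfl

/-- Under a null rotation about `ℓ`, each frame component of a
`p`-linear form `T` changes by a linear combination — with coefficients polynomial in
`z` — of components of strictly higher boost weight.  In particular the components of
maximal (= boost order) weight are unchanged, and the boost order is invariant under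
null rotations about `ℓ`. -/
theorem stmt_3 (N : ℕ) [NeZero N] (hN : 2 ≤ N) (p : ℕ)
    (f : Fin N → Fin N → ℝ) (hf : IsNullFrame f)
    (T : MultilinearMap ℝ (fun _ : Fin p => (Fin N → ℝ)) ℝ) :
    (∀ A : Fin p → Fin N, ∃ c : (Fin p → Fin N) → MvPolynomial (Fin N) ℝ,
      ∀ z : Fin N → ℝ,
        T (fun k => rotL f z (A k)) = T (fun k => f (A k)) +
          ∑ B ∈ Finset.univ.filter (fun B : Fin p → Fin N =>
              (∑ k, bw (A k)) < ∑ k, bw (B k)),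
            (MvPolynomial.eval z (c B)) * T (fun k => f (B k))) ∧
    (∀ z : Fin N → ℝ, ∀ A : Fin p → Fin N,
      ((∑ k, bw (A k) : ℤ) : WithBot ℤ) = boostOrder p T f →
        T (fun k => rotL f z (A k)) = T (fun k => f (A k))) ∧
    (∀ z : Fin N → ℝ, boostOrder p T (rotL f z) = boostOrder p T f) := by
  refine ⟨fun A => ⟨fun B => ∏ k, Ep N (A k) (B k), fun z => key hN f T A z⟩, ?_, ?_⟩
  · intro z A h
    rw [key hN f T A z]
    rw [Finset.sum_eq_zero, add_zero]
    intro B hB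
    simp only [Finset.mem_filter, Finset.mem_univ, true_and] at hB
    by_cases hTB : T (fun k => f (B k)) = 0
    · rw [hTB, mul_zero]
    · exfalso
      have h2 := le_boostOrder' T f B hTB
      rw [← bo_eq, ← h] at h2
      exact absurd (WithBot.coe_le_coe.mp h2) (by omega)
  · intro z
    apply le_antisymm
    · rw [bo_eq, bo_eq]
      exact boostOrder'_rot_le hN f T z
    · rw [bo_eq, bo_eq]
      conv_lhs => rw [← rotL_rotL_neg hN f z]
      exact boostOrder'_rot_le hN (rotL f z) T (-z)
end

section
/- Let N ≥ 2 and let (ℓ, n, m_2, …, m_{N−1}) and (ℓ′, n′, m′_2, …, m′_{N−1}) be two null frames of ℝ^N whose first vectors are proportional, ℓ′ = λℓ with λ ≠ 0. Then for every p-linear form T on ℝ^N, the boost order of T with respect to the first frame equals the boost order of T with respect to the second frame. Hence the boost order of T is a function B(ℓ) of the null direction spanned by ℓ only. -/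
lemma eta_eq {N : ℕ} (x y : Fin N → ℝ) :
    eta x y = ∑ a : Fin N, (if (a : ℕ) = 0 then -(x a) else x a) * y a := by
  unfold eta; refine Finset.sum_congr rfl fun a _ => ?_; split_ifs <;> ring

lemma eta_smul_left {N : ℕ} (c : ℝ) (x y : Fin N → ℝ) :
    eta (c • x) y = c * eta x y := by
  simp only [eta_eq, Finset.mul_sum, Pi.smul_apply, smul_eq_mul]
  refine Finset.sum_congr rfl fun a _ => ?_; split_ifs <;> ring

lemma eta_sum_right {N : ℕ} (x : Fin N → ℝ) (c : Fin N → ℝ) (v : Fin N → Fin N → ℝ) :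
    eta x (∑ B, c B • v B) = ∑ B, c B * eta x (v B) := by
  simp only [eta_eq, Finset.mul_sum, Finset.sum_apply, Pi.smul_apply, smul_eq_mul]
  rw [Finset.sum_comm]
  refine Finset.sum_congr rfl fun B _ => Finset.sum_congr rfl fun a _ => ?_
  split_ifs <;> ring

lemma val_one_of_two_le {N : ℕ} [NeZero N] (hN : 2 ≤ N) : ((1 : Fin N) : ℕ) = 1 := by
  rw [Fin.val_one', Nat.mod_eq_of_lt (by omega)]

lemma fin_cases3 {N : ℕ} [NeZero N] (hN : 2 ≤ N) (B : Fin N) :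
    B = 0 ∨ B = 1 ∨ 2 ≤ (B : ℕ) := by
  rcases Nat.lt_or_ge (B : ℕ) 2 with h | h
  · interval_cases hB : (B : ℕ)
    · exact Or.inl (Fin.ext (by simp [hB]))
    · exact Or.inr (Or.inl (Fin.ext (by rw [hB, val_one_of_two_le hN])))
  · exact Or.inr (Or.inr h)

open scoped Classical in
lemma boostOrder_le_aux (N : ℕ) [NeZero N] (hN : 2 ≤ N) (p : ℕ)
    (f g : Fin N → Fin N → ℝ) (hf : IsNullFrame f) (hg : IsNullFrame g)
    (lam : ℝ) (hlam : lam ≠ 0) (hprop : g 0 = lam • f 0)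
    (T : MultilinearMap ℝ (fun _ : Fin p => (Fin N → ℝ)) ℝ) :
    boostOrder p T g ≤ boostOrder p T f := by
  have h01 : (0 : Fin N) ≠ 1 := by
    intro e
    have := congrArg Fin.val e
    rw [val_one_of_two_le hN] at this
    simp at this
  have hcard : Fintype.card (Fin N) = Module.finrank ℝ (Fin N → ℝ) := by
    simp
  let b : Module.Basis (Fin N) ℝ (Fin N → ℝ) := basisOfLinearIndependentOfCardEqFinrank hf.1 hcard
  have hb : ⇑b = f := coe_basisOfLinearIndependentOfCardEqFinrank hf.1 hcard
  set c : Fin N → Fin N → ℝ := fun A B => b.repr (g A) B with hc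
  have hexp : ∀ A, g A = ∑ B, c A B • f B := by
    intro A
    conv_lhs => rw [← b.sum_repr (g A)]
    simp [hb, c]
  have hf0 : ∀ B : Fin N, eta (f 0) (f B) = if B = 1 then 1 else 0 := by
    intro B
    rcases fin_cases3 hN B with rfl | rfl | h2
    · rw [hf.2.1, if_neg h01]
    · rw [hf.2.2.2.1, if_pos rfl]
    · rw [(hf.2.2.2.2.2 B h2).1, if_neg]
      intro e; subst e
      rw [val_one_of_two_le hN] at h2; omega
  have hkey : ∀ A, eta (f 0) (g A) = c A 1 := by
    intro A
    rw [hexp A, eta_sum_right]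
    simp only [hf0, mul_ite, mul_one, mul_zero]
    simp
  have htri : ∀ A B : Fin N, c A B ≠ 0 → bw A ≤ bw B := by
    intro A B hcAB
    rcases fin_cases3 hN A with rfl | rfl | hA2
    · have hf0b : f 0 = b 0 := by rw [hb]
      have hcB : c 0 B = lam * (Finsupp.single (0 : Fin N) (1:ℝ)) B := by
        simp only [c, hprop, map_smul, hf0b, Module.Basis.repr_self, Finsupp.smul_apply,
          smul_eq_mul]
      have hB0 : B = 0 := by
        by_contra hB
        rw [hcB, Finsupp.single_apply, if_neg (fun e => hB e.symm), mul_zero] at hcAB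
        exact hcAB rfl
      subst hB0; exact le_refl _
    · have h1 : bw (1 : Fin N) = -1 := by
        unfold bw
        rw [val_one_of_two_le hN]
        norm_num
      rw [h1]; unfold bw; split_ifs <;> omega
    · have h0 : eta (g 0) (g A) = 0 := (hg.2.2.2.2.2 A hA2).1
      rw [hprop, eta_smul_left] at h0
      have hfg : eta (f 0) (g A) = 0 := by
        rcases mul_eq_zero.1 h0 with h | h
        · exact absurd h hlam
        · exact h
      have hc1 : c A 1 = 0 := by rw [← hkey A]; exact hfg
      have hbwA : bw A = 0 := by
        unfold bw; split_ifs <;> omega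
      have hB1 : B ≠ 1 := fun e => hcAB (e ▸ hc1)
      rw [hbwA]; unfold bw
      split_ifs with e1 e2
      · omega
      · exact absurd (Fin.ext (by rw [e2, val_one_of_two_le hN])) hB1
      · omega
  have hT : ∀ A : Fin p → Fin N, T (fun k => g (A k)) =
      ∑ D : Fin p → Fin N, (∏ k, c (A k) (D k)) • T (fun k => f (D k)) := by
    intro A
    rw [show (fun k => g (A k)) = fun k => ∑ B, c (A k) B • f B from funext fun k => hexp _]
    rw [T.map_sum]
    exact Finset.sum_congr rfl fun D _ => T.map_smul_univ _ _
  unfold boostOrder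
  refine Finset.sup_le fun A _ => ?_
  split_ifs with h
  · exact bot_le
  · rw [hT A] at h
    obtain ⟨D, -, hD⟩ := Finset.exists_ne_zero_of_sum_ne_zero h
    have hprod : (∏ k, c (A k) (D k)) ≠ 0 := fun e => hD (by simp [e])
    have hTD : T (fun k => f (D k)) ≠ 0 := fun e => hD (by simp [e])
    have hle : (∑ k, bw (A k)) ≤ ∑ k, bw (D k) :=
      Finset.sum_le_sum fun k _ =>
        htri _ _ (Finset.prod_ne_zero_iff.1 hprod k (Finset.mem_univ k))
    calc ((∑ k, bw (A k) : ℤ) : WithBot ℤ) ≤ ((∑ k, bw (D k) : ℤ) : WithBot ℤ) := by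
          exact_mod_cast hle
      _ ≤ _ := by
          have := Finset.le_sup (f := fun D : Fin p → Fin N =>
            if T (fun k => f (D k)) = 0 then (⊥ : WithBot ℤ)
            else ((∑ k, bw (D k) : ℤ) : WithBot ℤ)) (Finset.mem_univ D)
          simpa [hTD] using this

/-- If two null frames have proportional first vectors, `ℓ' = λℓ`
(`λ ≠ 0`), then every `p`-linear form `T` has the same boost order with respect to the
two frames: the boost order is a function of the null direction `[ℓ]` only. -/
theorem stmt_4 (N : ℕ) [NeZero N] (hN : 2 ≤ N) (p : ℕ)
    (f g : Fin N → Fin N → ℝ) (hf : IsNullFrame f) (hg : IsNullFrame g)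
    (lam : ℝ) (hlam : lam ≠ 0) (hprop : g 0 = lam • f 0)
    (T : MultilinearMap ℝ (fun _ : Fin p => (Fin N → ℝ)) ℝ) :
    boostOrder p T f = boostOrder p T g := by
  have hprop' : f 0 = lam⁻¹ • g 0 := by
    rw [hprop, smul_smul, inv_mul_cancel₀ hlam, one_smul]
  exact le_antisymm
    (boostOrder_le_aux N hN p g f hg hf lam⁻¹ (inv_ne_zero hlam) hprop' T)
    (boostOrder_le_aux N hN p f g hf hg lam hlam hprop T)
end

section
/- Let N ≥ 4, let W be a Weyl tensor on ℝ^N and let k be a nonzero null vector. Then the following are equivalent: (i) W(k,x,k,y) = 0 for all x, y ∈ ℝ^N with η(k,x) = η(k,y) = 0 (i.e., k is a WAND of W, meaning all boost-weight +2 frame components vanish in any null frame with ℓ = k); (ii) writing B(x,y) := W(x,k,k,y) and ⟨k,x⟩ := η(k,x), one has ⟨k,u⟩⟨k,v⟩B(x,y) − ⟨k,u⟩⟨k,y⟩B(x,v) − ⟨k,x⟩⟨k,v⟩B(u,y) + ⟨k,x⟩⟨k,y⟩B(u,v) = 0 for all u, x, y, v ∈ ℝ^N (the coordinate-free form of the alignment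 equation k^b k^c k_{[e}C_{a]bc[d}k_{f]} = 0). -/
/-- A Weyl tensor on `ℝ^N`: a 4-linear form with the pair symmetries
`W(x,y,z,w) = -W(y,x,z,w) = W(z,w,x,y)`, the first Bianchi identity, and all
`η`-traces zero (the standard basis being `η`-orthonormal, the `η`-trace of
`(u,v) ↦ W(u,x,v,y)` is `∑ₐ η^{aa} W(eₐ,x,eₐ,y)` with `η^{00} = -1`, `η^{aa} = 1`). -/
def IsWeyl {N : ℕ} (W : MultilinearMap ℝ (fun _ : Fin 4 => (Fin N → ℝ)) ℝ) : Prop :=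
  (∀ x y z w : Fin N → ℝ, W ![y, x, z, w] = - W ![x, y, z, w]) ∧
  (∀ x y z w : Fin N → ℝ, W ![z, w, x, y] = W ![x, y, z, w]) ∧
  (∀ x y z w : Fin N → ℝ,
    W ![x, y, z, w] + W ![x, z, w, y] + W ![x, w, y, z] = 0) ∧
  (∀ x y : Fin N → ℝ,
    ∑ a : Fin N, (if (a : ℕ) = 0 then (-1 : ℝ) else 1) *
      W ![Pi.single a 1, x, Pi.single a 1, y] = 0)

lemma eta_sub_smul {N : ℕ} (k x y : Fin N → ℝ) (c : ℝ) :
    eta k (x - c • y) = eta k x - c * eta k y := by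
  unfold eta
  simp only [Pi.sub_apply, Pi.smul_apply, smul_eq_mul]
  rw [Finset.mul_sum, ← Finset.sum_sub_distrib]
  apply Finset.sum_congr rfl
  intro a _
  split <;> ring

lemma eta_exists_one {N : ℕ} (k : Fin N → ℝ) (hk : k ≠ 0) :
    ∃ n : Fin N → ℝ, eta k n = 1 := by
  obtain ⟨a, ha⟩ : ∃ a, k a ≠ 0 := by
    by_contra h; push_neg at h; exact hk (funext h)
  refine ⟨Pi.single a ((if (a : ℕ) = 0 then -1 else 1) / k a), ?_⟩
  unfold eta
  rw [Finset.sum_eq_single a]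
  · rcases eq_or_ne ((a : ℕ)) 0 with h | h <;>
      · simp only [h, if_true, if_false, Pi.single_apply, if_pos rfl]
        field_simp
  · intro b _ hb
    simp [Pi.single_apply, hb]
  · simp

lemma upd0 {N : ℕ} (x y z w v : Fin N → ℝ) :
    Function.update ![x, y, z, w] 0 v = ![v, y, z, w] := by
  ext i j; fin_cases i <;> simp

lemma upd3 {N : ℕ} (x y z w v : Fin N → ℝ) :
    Function.update ![x, y, z, w] 3 v = ![x, y, z, v] := by
  ext i j; fin_cases i <;> simp

lemma lin0 {N : ℕ} (W : MultilinearMap ℝ (fun _ : Fin 4 => (Fin N → ℝ)) ℝ)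
    (x p y z w : Fin N → ℝ) (c : ℝ) :
    W ![x - c • p, y, z, w] = W ![x, y, z, w] - c * W ![p, y, z, w] := by
  have h1 := W.map_update_sub ![x, y, z, w] 0 x (c • p)
  have h2 := W.map_update_smul ![x, y, z, w] 0 c p
  rw [upd0, upd0, upd0] at h1
  rw [upd0, upd0] at h2
  rw [h1, h2, smul_eq_mul]

lemma lin3 {N : ℕ} (W : MultilinearMap ℝ (fun _ : Fin 4 => (Fin N → ℝ)) ℝ)
    (x y z w p : Fin N → ℝ) (c : ℝ) :
    W ![x, y, z, w - c • p] = W ![x, y, z, w] - c * W ![x, y, z, p] := by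
  have h1 := W.map_update_sub ![x, y, z, w] 3 w (c • p)
  have h2 := W.map_update_smul ![x, y, z, w] 3 c p
  rw [upd3, upd3, upd3] at h1
  rw [upd3, upd3] at h2
  rw [h1, h2, smul_eq_mul]

/-- For a Weyl tensor `W` and a nonzero null vector `k`, `k` is a
WAND of `W` (all boost-weight `+2` components vanish) if and only if the coordinate-free
alignment equation `k^b k^c k_{[e} C_{a]bc[d} k_{f]} = 0` holds, i.e. with
`B(x,y) := W(x,k,k,y)` and `⟨k,x⟩ := η(k,x)`:
`⟨k,u⟩⟨k,v⟩B(x,y) - ⟨k,u⟩⟨k,y⟩B(x,v) - ⟨k,x⟩⟨k,v⟩B(u,y) + ⟨k,x⟩⟨k,y⟩B(u,v) = 0`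
for all `u, x, y, v`. -/
theorem stmt_9 (N : ℕ) [NeZero N] (hN : 4 ≤ N)
    (W : MultilinearMap ℝ (fun _ : Fin 4 => (Fin N → ℝ)) ℝ) (hW : IsWeyl W)
    (k : Fin N → ℝ) (hk : k ≠ 0) (hnull : eta k k = 0) :
    (∀ x y : Fin N → ℝ, eta k x = 0 → eta k y = 0 → W ![k, x, k, y] = 0) ↔
    (∀ u x y v : Fin N → ℝ,
      eta k u * eta k v * W ![x, k, k, y] - eta k u * eta k y * W ![x, k, k, v]
        - eta k x * eta k v * W ![u, k, k, y]
        + eta k x * eta k y * W ![u, k, k, v] = 0) := by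
  obtain ⟨n, hn⟩ := eta_exists_one k hk
  constructor
  · intro hwand u x y v
    have key : ∀ x y : Fin N → ℝ, W ![x, k, k, y] =
        eta k y * W ![x, k, k, n] + eta k x * W ![n, k, k, y]
          - eta k x * eta k y * W ![n, k, k, n] := by
      intro x y
      have hx' : eta k (x - eta k x • n) = 0 := by
        rw [eta_sub_smul, hn]; ring
      have hy' : eta k (y - eta k y • n) = 0 := by
        rw [eta_sub_smul, hn]; ring
      have h0 := hwand _ _ hx' hy'
      have hB : W ![x - eta k x • n, k, k, y - eta k y • n] = 0 := by
        rw [hW.1 k (x - eta k x • n) k (y - eta k y • n), h0, neg_zero]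
      rw [lin0, lin3, lin3] at hB
      linear_combination hB
    rw [key x y, key x v, key u y, key u v]
    ring
  · intro h x y hx hy
    have h' := h n x y n
    rw [hn, hx, hy] at h'
    rw [hW.1 x k k y]
    linear_combination -h'
end

section
/- Let N ≥ 4, let W be a Weyl tensor on ℝ^N and fix a null frame (ℓ, n, m_2, …, m_{N−1}). For z ∈ ℝ^{N−2} set k(z) = ℓ − ½(Σ_i z_i²) n + Σ_i z_i m_i and m̂_i(z) = m_i − z_i n (so that (k(z), n, m̂_i(z)) is again a null frame). Then for each pair (i,j), the top alignment component z ↦ W(k(z), m̂_i(z), k(z), m̂_j(z)) is a polynomial function of z = (z_2, …, z_{N−1}) of degree at most 4; thus the alignment equations form a system of degree-4 polynomial equations in N−2 variables. -/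
/-- For `z ∈ ℝ^{N-2}` let
`k(z) = ℓ - ½(∑ᵢ zᵢ²) n + ∑ᵢ zᵢ mᵢ` and `m̂ᵢ(z) = mᵢ - zᵢ n` (a null rotation about
`n`).  Then each top alignment component `z ↦ W(k(z), m̂ᵢ(z), k(z), m̂ⱼ(z))` is a
polynomial in `z` of (total) degree at most `4`: the alignment equations form a system
of degree-4 polynomial equations in `N-2` variables. -/
theorem stmt_10 (N : ℕ) [NeZero N] (hN : 4 ≤ N)
    (W : MultilinearMap ℝ (fun _ : Fin 4 => (Fin N → ℝ)) ℝ) (hW : IsWeyl W)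
    (f : Fin N → Fin N → ℝ) (hf : IsNullFrame f)
    (i j : Fin N) (hi : 2 ≤ (i : ℕ)) (hj : 2 ≤ (j : ℕ)) :
    ∃ P : MvPolynomial (Fin N) ℝ, P.totalDegree ≤ 4 ∧
      ∀ z : Fin N → ℝ,
        MvPolynomial.eval z P =
          W ![f 0 - ((1/2) * ∑ l ∈ sp N, (z l)^2) • f 1 + ∑ l ∈ sp N, z l • f l,
              f i - z i • f 1,
              f 0 - ((1/2) * ∑ l ∈ sp N, (z l)^2) • f 1 + ∑ l ∈ sp N, z l • f l,
              f j - z j • f 1] := by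
  classical
  obtain ⟨hanti, hpair, -, -⟩ := hW
  have hv1 : ((1 : Fin N) : ℕ) = 1 := by
    rw [Fin.val_one']; exact Nat.mod_eq_of_lt (by omega)
  have hv0 : ((0 : Fin N) : ℕ) = 0 := rfl
  have h01 : (0 : Fin N) ≠ 1 := by
    intro h
    have := congrArg Fin.val h
    rw [hv0, hv1] at this
    omega
  have hi1 : i ≠ 1 := by
    intro h; rw [h, hv1] at hi; omega
  have hj1 : j ≠ 1 := by
    intro h; rw [h, hv1] at hj; omega
  -- polynomial coefficients of the four slots
  set Q1 : Fin N → MvPolynomial (Fin N) ℝ := fun t =>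
    if t = 0 then 1 else if t = 1 then MvPolynomial.C (-(1/2 : ℝ)) * ∑ l ∈ sp N, MvPolynomial.X l ^ 2
    else MvPolynomial.X t with hQ1
  set Q2 : Fin N → Fin N → MvPolynomial (Fin N) ℝ := fun idx t =>
    if t = idx then 1 else if t = 1 then - MvPolynomial.X idx else 0 with hQ2
  set q : Fin 4 → Fin N → MvPolynomial (Fin N) ℝ := ![Q1, Q2 i, Q1, Q2 j] with hq
  refine ⟨∑ r : Fin 4 → Fin N, MvPolynomial.C (W fun a => f (r a)) * ∏ a, q a (r a), ?_, ?_⟩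
  · -- degree bound
    refine le_trans (MvPolynomial.totalDegree_finset_sum _ _) (Finset.sup_le ?_)
    intro r _
    by_cases hc : (r 0 = 1 ∧ r 1 = 1) ∨ (r 2 = 1 ∧ r 3 = 1)
    · have hveq : (fun a => f (r a)) = ![f (r 0), f (r 1), f (r 2), f (r 3)] := by
        funext a; fin_cases a <;> rfl
      have hw0 : (W fun a => f (r a)) = 0 := by
        rcases hc with ⟨h0, h1⟩ | ⟨h2, h3⟩
        · rw [hveq, h0, h1]
          have := hanti (f 1) (f 1) (f (r 2)) (f (r 3)); linarith
        · rw [hveq, h2, h3, ← hpair (f (r 0)) (f (r 1)) (f 1) (f 1)]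
          have := hanti (f 1) (f 1) (f (r 0)) (f (r 1)); linarith
      simp [hw0]
    · push_neg at hc
      have hd1 : ∀ t : Fin N, (Q1 t).totalDegree ≤ if t = 1 then 2 else 1 := by
        intro t
        by_cases h0 : t = 0
        · subst h0; simp [hQ1, h01]
        by_cases h1 : t = 1
        · subst h1
          simp only [hQ1, if_neg (Ne.symm h01), if_pos rfl, if_true]
          refine le_trans (MvPolynomial.totalDegree_mul _ _) ?_
          simp only [MvPolynomial.totalDegree_C, zero_add]
          refine le_trans (MvPolynomial.totalDegree_finset_sum _ _) (Finset.sup_le ?_)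
          intro l _
          refine le_trans (MvPolynomial.totalDegree_pow _ _) ?_
          simp [MvPolynomial.totalDegree_X]
        · simp [hQ1, h0, h1, MvPolynomial.totalDegree_X]
      have hd2 : ∀ idx t : Fin N, (Q2 idx t).totalDegree ≤ if t = 1 then 1 else 0 := by
        intro idx t
        by_cases ht : t = idx
        · subst ht; simp [hQ2]
        by_cases h1 : t = 1
        · subst h1
          simp only [hQ2, if_neg ht, if_pos rfl, if_true]
          simp [MvPolynomial.totalDegree_neg, MvPolynomial.totalDegree_X]
        · simp [hQ2, ht, h1]
      refine le_trans (MvPolynomial.totalDegree_mul _ _) ?_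
      rw [MvPolynomial.totalDegree_C, zero_add]
      refine le_trans (MvPolynomial.totalDegree_finset_prod _ _) ?_
      rw [Fin.sum_univ_four]
      have hq0 : q 0 = Q1 := rfl
      have hq1 : q 1 = Q2 i := rfl
      have hq2 : q 2 = Q1 := rfl
      have hq3 : q 3 = Q2 j := rfl
      rw [hq0, hq1, hq2, hq3]
      have pair1 : (Q1 (r 0)).totalDegree + (Q2 i (r 1)).totalDegree ≤ 2 := by
        by_cases e1 : r 1 = 1
        · have e0 : r 0 ≠ 1 := fun h0 => hc.1 h0 e1
          have b0 := hd1 (r 0); rw [if_neg e0] at b0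
          have b1 := hd2 i (r 1); rw [if_pos e1] at b1
          omega
        · have b0 := hd1 (r 0)
          have b1 := hd2 i (r 1); rw [if_neg e1] at b1
          have b0' : (Q1 (r 0)).totalDegree ≤ 2 := le_trans b0 (by split_ifs <;> omega)
          omega
      have pair2 : (Q1 (r 2)).totalDegree + (Q2 j (r 3)).totalDegree ≤ 2 := by
        by_cases e3 : r 3 = 1
        · have e2 : r 2 ≠ 1 := fun h2 => hc.2 h2 e3
          have b2 := hd1 (r 2); rw [if_neg e2] at b2
          have b3 := hd2 j (r 3); rw [if_pos e3] at b3
          omega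
        · have b2 := hd1 (r 2)
          have b3 := hd2 j (r 3); rw [if_neg e3] at b3
          have b2' : (Q1 (r 2)).totalDegree ≤ 2 := le_trans b2 (by split_ifs <;> omega)
          omega
      omega
  · -- evaluation
    intro z
    have hsplit : ∀ g : Fin N → (Fin N → ℝ), ∑ t : Fin N, g t = g 0 + g 1 + ∑ t ∈ sp N, g t := by
      intro g
      have hset : (Finset.univ.filter (fun t : Fin N => ¬ 2 ≤ (t : ℕ))) = {0, 1} := by
        ext t
        simp only [Finset.mem_filter, Finset.mem_univ, true_and, Finset.mem_insert,
          Finset.mem_singleton, Fin.ext_iff, hv0, hv1]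
        omega
      rw [← Finset.sum_filter_add_sum_filter_not Finset.univ (fun t : Fin N => 2 ≤ (t : ℕ)) g,
        hset, Finset.sum_pair h01]
      rw [sp]
      exact add_comm _ _
    have hspne : ∀ t : Fin N, t ∈ sp N → (t ≠ 0 ∧ t ≠ 1) := by
      intro t ht
      rw [sp, Finset.mem_filter] at ht
      constructor <;> intro h <;> rw [h] at ht
      · rw [hv0] at ht; omega
      · rw [hv1] at ht; omega
    have hk : (f 0 - ((1/2) * ∑ l ∈ sp N, (z l)^2) • f 1 + ∑ l ∈ sp N, z l • f l)
        = ∑ t : Fin N, (MvPolynomial.eval z (Q1 t)) • f t := by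
      have h0' : (MvPolynomial.eval z (Q1 0)) • f 0 = f 0 := by
        rw [hQ1]
        simp
      have h1' : (MvPolynomial.eval z (Q1 1)) • f 1
          = (-(1/2) * ∑ l ∈ sp N, (z l)^2) • f 1 := by
        rw [hQ1]
        simp only
        rw [if_neg (Ne.symm h01)]
        simp
      have hsp' : ∀ t ∈ sp N, (MvPolynomial.eval z (Q1 t)) • f t = z t • f t := by
        intro t ht
        rw [hQ1]
        simp only
        rw [if_neg (hspne t ht).1, if_neg (hspne t ht).2, MvPolynomial.eval_X]
      rw [hsplit (fun t => (MvPolynomial.eval z (Q1 t)) • f t)]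
      rw [h0', h1', Finset.sum_congr rfl hsp']
      module
    have hm : ∀ idx : Fin N, idx ≠ 1 → (f idx - z idx • f 1)
        = ∑ t : Fin N, (MvPolynomial.eval z (Q2 idx t)) • f t := by
      intro idx hidx
      have key : ∀ t : Fin N, (MvPolynomial.eval z (Q2 idx t)) • f t
          = (if t = idx then f t else 0) + (if t = 1 then (-(z idx)) • f t else 0) := by
        intro t
        by_cases ht : t = idx
        · subst ht; simp [hQ2, hidx]
        by_cases h1 : t = 1
        · subst h1; simp [hQ2, ht]
        · simp [hQ2, ht, h1]
      rw [Finset.sum_congr rfl (fun t _ => key t), Finset.sum_add_distrib]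
      simp only [Finset.sum_ite_eq', Finset.mem_univ, if_true]
      module
    have hvec : (![f 0 - ((1/2) * ∑ l ∈ sp N, (z l)^2) • f 1 + ∑ l ∈ sp N, z l • f l,
              f i - z i • f 1,
              f 0 - ((1/2) * ∑ l ∈ sp N, (z l)^2) • f 1 + ∑ l ∈ sp N, z l • f l,
              f j - z j • f 1] : Fin 4 → (Fin N → ℝ))
        = fun a => ∑ t : Fin N, (MvPolynomial.eval z (q a t)) • f t := by
      funext a
      fin_cases a
      · simpa [hq] using hk
      · simpa [hq] using hm i hi1
      · simpa [hq] using hk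
      · simpa [hq] using hm j hj1
    rw [hvec, MultilinearMap.map_sum, map_sum]
    refine Finset.sum_congr rfl ?_
    intro r _
    rw [MultilinearMap.map_smul_univ]
    simp only [map_mul, MvPolynomial.eval_C, map_prod, smul_eq_mul]
    ring
end

section
/- Let N = 4. Then every Weyl tensor W on ℝ^4 possesses at least one aligned null direction: there exists a nonzero vector k with η(k,k) = 0 such that W(k,x,k,y) = 0 for all x, y ∈ ℝ^4 with η(k,x) = η(k,y) = 0. -/
namespace Stmt11Aux


noncomputable def lv : Fin 4 → ℝ := ![1, 1, 0, 0]
noncomputable def nv : Fin 4 → ℝ := ![-(1/2), 1/2, 0, 0]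
noncomputable def m2v : Fin 4 → ℝ := ![0, 0, 1, 0]
noncomputable def m3v : Fin 4 → ℝ := ![0, 0, 0, 1]
noncomputable def kv (a b : ℝ) : Fin 4 → ℝ := lv + a • m2v + b • m3v + (-((a^2+b^2)/2)) • nv
noncomputable def uv (a : ℝ) : Fin 4 → ℝ := m2v + (-a) • nv
noncomputable def vv (b : ℝ) : Fin 4 → ℝ := m3v + (-b) • nv

variable (W : MultilinearMap ℝ (fun _ : Fin 4 => (Fin 4 → ℝ)) ℝ)

lemma upd0 (x y z w v : Fin 4 → ℝ) : Function.update ![x,y,z,w] (0:Fin 4) v = ![v,y,z,w] := by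
  funext i; fin_cases i <;> simp
lemma upd1 (x y z w v : Fin 4 → ℝ) : Function.update ![x,y,z,w] (1:Fin 4) v = ![x,v,z,w] := by
  funext i; fin_cases i <;> simp
lemma upd2 (x y z w v : Fin 4 → ℝ) : Function.update ![x,y,z,w] (2:Fin 4) v = ![x,y,v,w] := by
  funext i; fin_cases i <;> simp
lemma upd3 (x y z w v : Fin 4 → ℝ) : Function.update ![x,y,z,w] (3:Fin 4) v = ![x,y,z,v] := by
  funext i; fin_cases i <;> simp

lemma Wadd0 (x x' y z w : Fin 4 → ℝ) :
    W ![x + x', y, z, w] = W ![x, y, z, w] + W ![x', y, z, w] := by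
  have h := W.map_update_add ![x, y, z, w] 0 x x'
  rwa [upd0, upd0, upd0] at h
lemma Wadd1 (x y y' z w : Fin 4 → ℝ) :
    W ![x, y + y', z, w] = W ![x, y, z, w] + W ![x, y', z, w] := by
  have h := W.map_update_add ![x, y, z, w] 1 y y'
  rwa [upd1, upd1, upd1] at h
lemma Wadd2 (x y z z' w : Fin 4 → ℝ) :
    W ![x, y, z + z', w] = W ![x, y, z, w] + W ![x, y, z', w] := by
  have h := W.map_update_add ![x, y, z, w] 2 z z'
  rwa [upd2, upd2, upd2] at h
lemma Wadd3 (x y z w w' : Fin 4 → ℝ) :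
    W ![x, y, z, w + w'] = W ![x, y, z, w] + W ![x, y, z, w'] := by
  have h := W.map_update_add ![x, y, z, w] 3 w w'
  rwa [upd3, upd3, upd3] at h
lemma Wsmul0 (c : ℝ) (x y z w : Fin 4 → ℝ) :
    W ![c • x, y, z, w] = c * W ![x, y, z, w] := by
  have h := W.map_update_smul ![x, y, z, w] 0 c x
  rw [upd0, upd0] at h; rw [h, smul_eq_mul]
lemma Wsmul1 (c : ℝ) (x y z w : Fin 4 → ℝ) :
    W ![x, c • y, z, w] = c * W ![x, y, z, w] := by
  have h := W.map_update_smul ![x, y, z, w] 1 c y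
  rw [upd1, upd1] at h; rw [h, smul_eq_mul]
lemma Wsmul2 (c : ℝ) (x y z w : Fin 4 → ℝ) :
    W ![x, y, c • z, w] = c * W ![x, y, z, w] := by
  have h := W.map_update_smul ![x, y, z, w] 2 c z
  rw [upd2, upd2] at h; rw [h, smul_eq_mul]
lemma Wsmul3 (c : ℝ) (x y z w : Fin 4 → ℝ) :
    W ![x, y, z, c • w] = c * W ![x, y, z, w] := by
  have h := W.map_update_smul ![x, y, z, w] 3 c w
  rw [upd3, upd3] at h; rw [h, smul_eq_mul]


lemma reim (x y : ℝ) : ((x:ℂ) + (y:ℂ) * Complex.I = 0) ↔ (x = 0 ∧ y = 0) := by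
  constructor
  · intro h
    have h1 := congrArg Complex.re h
    have h2 := congrArg Complex.im h
    simp at h1 h2
    exact ⟨h1, h2⟩
  · rintro ⟨hx, hy⟩
    rw [hx, hy]
    simp

end Stmt11Aux

set_option maxHeartbeats 3000000 in
open Stmt11Aux in
/-- Every Weyl tensor on `ℝ⁴` possesses at least one aligned null
direction: there is a nonzero null vector `k` with `W(k,x,k,y) = 0` for all `x, y`
orthogonal to `k`. -/
theorem stmt_11 (W : MultilinearMap ℝ (fun _ : Fin 4 => (Fin 4 → ℝ)) ℝ)
    (hW : IsWeyl W) :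
    ∃ k : Fin 4 → ℝ, k ≠ 0 ∧ eta k k = 0 ∧
      ∀ x y : Fin 4 → ℝ, eta k x = 0 → eta k y = 0 → W ![k, x, k, y] = 0 := by
  obtain ⟨hA, hP, hB, hTr⟩ := hW
  have hz12 : ∀ p q r : Fin 4 → ℝ, W ![p, p, q, r] = 0 := by
    intro p q r; linarith [hA p p q r]
  have hz34 : ∀ p q r : Fin 4 → ℝ, W ![p, q, r, r] = 0 := by
    intro p q r; linarith [hP r r p q, hA r r p q]
  have hT : ∀ x y, W ![lv,x,nv,y] + W ![nv,x,lv,y] + W ![m2v,x,m2v,y] + W ![m3v,x,m3v,y] = 0 := by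
    intro x y
    have h := hTr x y
    rw [Fin.sum_univ_four] at h
    have e0 : (Pi.single (0:Fin 4) (1:ℝ)) = (1/2 : ℝ) • lv + (-1 : ℝ) • nv := by
      funext i; fin_cases i <;> simp [lv, nv, Pi.single_apply] <;> norm_num [Fin.ext_iff]
    have e1 : (Pi.single (1:Fin 4) (1:ℝ)) = (1/2 : ℝ) • lv + (1 : ℝ) • nv := by
      funext i; fin_cases i <;> simp [lv, nv, Pi.single_apply] <;> norm_num [Fin.ext_iff]
    have e2 : (Pi.single (2:Fin 4) (1:ℝ)) = m2v := by
      funext i; fin_cases i <;> simp [m2v, Pi.single_apply] <;> norm_num [Fin.ext_iff]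
    have e3 : (Pi.single (3:Fin 4) (1:ℝ)) = m3v := by
      funext i; fin_cases i <;> simp [m3v, Pi.single_apply] <;> norm_num [Fin.ext_iff]
    rw [e0, e1, e2, e3] at h
    simp only [Wadd0, Wadd2, Wsmul0, Wsmul2] at h
    norm_num [show ((0:Fin 4):ℕ) = 0 from rfl, show ((1:Fin 4):ℕ) = 1 from rfl,
      show ((2:Fin 4):ℕ) = 2 from rfl, show ((3:Fin 4):ℕ) = 3 from rfl] at h
    linear_combination h
  by_cases hc4 : W ![m3v, nv, m3v, nv] = 0 ∧ W ![m3v, nv, m2v, nv] = 0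
  · -- Case A : n itself is a WAND
    obtain ⟨h41, h42⟩ := hc4
    have e22 : W ![nv, m2v, nv, m2v] = 0 := by
      linear_combination ((-1 : ℝ)) * (hA nv m2v m2v nv) + ((-1/2 : ℝ)) * (hA nv nv m2v m2v) + ((-2/3 : ℝ)) * (hB lv nv nv nv) + ((1 : ℝ)) * (hB nv nv m2v m2v) + ((-1 : ℝ)) * (hP lv nv nv nv) + ((1 : ℝ)) * (hT nv nv) + ((-1 : ℝ)) * (h41)
    have e23 : W ![nv, m2v, nv, m3v] = 0 := by
      linear_combination ((-1 : ℝ)) * (hA nv m3v m2v nv) + ((-1/2 : ℝ)) * (hA nv nv m3v m2v) + ((1 : ℝ)) * (hB nv nv m3v m2v) + ((1 : ℝ)) * (h42)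
    have e33 : W ![nv, m3v, nv, m3v] = 0 := by
      linear_combination ((-1 : ℝ)) * (hA nv m3v m3v nv) + ((-1/2 : ℝ)) * (hA nv nv m3v m3v) + ((1 : ℝ)) * (hB nv nv m3v m3v) + ((1 : ℝ)) * (h41)
    have e32 : W ![nv, m3v, nv, m2v] = 0 := by
      linear_combination e23 + hP nv m2v nv m3v
    refine ⟨nv, ?_, ?_, ?_⟩
    · intro h
      have h1 := congrFun h 1
      norm_num [nv] at h1
    · norm_num [eta, nv, Fin.sum_univ_four, show ((0:Fin 4):ℕ) = 0 from rfl, show ((1:Fin 4):ℕ) = 1 from rfl,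
          show ((2:Fin 4):ℕ) = 2 from rfl, show ((3:Fin 4):ℕ) = 3 from rfl]
      simp
    · intro x y hx hy
      have hx0 : x 0 + x 1 = 0 := by
        have h := hx
        norm_num [eta, nv, Fin.sum_univ_four, show ((0:Fin 4):ℕ) = 0 from rfl, show ((1:Fin 4):ℕ) = 1 from rfl,
          show ((2:Fin 4):ℕ) = 2 from rfl, show ((3:Fin 4):ℕ) = 3 from rfl] at h
        simp at h
        linarith
      have hy0 : y 0 + y 1 = 0 := by
        have h := hy
        norm_num [eta, nv, Fin.sum_univ_four, show ((0:Fin 4):ℕ) = 0 from rfl, show ((1:Fin 4):ℕ) = 1 from rfl,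
          show ((2:Fin 4):ℕ) = 2 from rfl, show ((3:Fin 4):ℕ) = 3 from rfl] at h
        simp at h
        linarith
      have hx' : x = (2 * x 1) • nv + x 2 • m2v + x 3 • m3v := by
        funext i; fin_cases i <;> simp [nv, m2v, m3v] <;> linarith
      have hy' : y = (2 * y 1) • nv + y 2 • m2v + y 3 • m3v := by
        funext i; fin_cases i <;> simp [nv, m2v, m3v] <;> linarith
      rw [hx', hy']
      simp only [Wadd1, Wsmul1, Wadd3, Wsmul3]
      linear_combination (2*x 1)*(2*y 1)*(hz12 nv nv nv) + (2*x 1)*(y 2)*(hz12 nv nv m2v) +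
        (2*x 1)*(y 3)*(hz12 nv nv m3v) + (x 2)*(2*y 1)*(hz34 nv m2v nv) +
        (x 3)*(2*y 1)*(hz34 nv m3v nv) + (x 2)*(y 2)*e22 + (x 2)*(y 3)*e23 +
        (x 3)*(y 2)*e32 + (x 3)*(y 3)*e33
  · -- Case B : the quartic has a nonzero leading coefficient, take a root
    rw [not_and_or] at hc4
    have hC4 : ((((-1/2 : ℝ) * W ![m3v, nv, m3v, nv] : ℝ) : ℂ) + (((-1/2 : ℝ) * W ![m3v, nv, m2v, nv] : ℝ) : ℂ) * Complex.I) ≠ 0 := by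
      rw [Ne, reim]
      rintro ⟨h1, h2⟩
      rcases hc4 with h | h <;> apply h <;> linarith
    obtain ⟨z, hzr⟩ := Complex.exists_root (f := Polynomial.C ((((-1/2 : ℝ) * W ![m3v, nv, m3v, nv] : ℝ) : ℂ) + (((-1/2 : ℝ) * W ![m3v, nv, m2v, nv] : ℝ) : ℂ) * Complex.I) * Polynomial.X^4 +
        Polynomial.C ((((2 : ℝ) * W ![m3v, m2v, m3v, nv] : ℝ) : ℂ) + (((2 : ℝ) * W ![m3v, m2v, m2v, nv] : ℝ) : ℂ) * Complex.I) * Polynomial.X^3 + Polynomial.C ((((-3 : ℝ) * W ![m3v, m2v, m3v, m2v] : ℝ) : ℂ) + (((-3 : ℝ) * W ![m3v, m2v, nv, lv] : ℝ) : ℂ) * Complex.I) * Polynomial.X^2 +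
        Polynomial.C ((((-4 : ℝ) * W ![m3v, m2v, m3v, lv] : ℝ) : ℂ) + (((4 : ℝ) * W ![m3v, m2v, m2v, lv] : ℝ) : ℂ) * Complex.I) * Polynomial.X + Polynomial.C ((((-2 : ℝ) * W ![m3v, lv, m3v, lv] : ℝ) : ℂ) + (((2 : ℝ) * W ![m3v, lv, m2v, lv] : ℝ) : ℂ) * Complex.I)) (by
      have hdeg : (Polynomial.C ((((-1/2 : ℝ) * W ![m3v, nv, m3v, nv] : ℝ) : ℂ) + (((-1/2 : ℝ) * W ![m3v, nv, m2v, nv] : ℝ) : ℂ) * Complex.I) * Polynomial.X^4 +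
          Polynomial.C ((((2 : ℝ) * W ![m3v, m2v, m3v, nv] : ℝ) : ℂ) + (((2 : ℝ) * W ![m3v, m2v, m2v, nv] : ℝ) : ℂ) * Complex.I) * Polynomial.X^3 + Polynomial.C ((((-3 : ℝ) * W ![m3v, m2v, m3v, m2v] : ℝ) : ℂ) + (((-3 : ℝ) * W ![m3v, m2v, nv, lv] : ℝ) : ℂ) * Complex.I) * Polynomial.X^2 +
          Polynomial.C ((((-4 : ℝ) * W ![m3v, m2v, m3v, lv] : ℝ) : ℂ) + (((4 : ℝ) * W ![m3v, m2v, m2v, lv] : ℝ) : ℂ) * Complex.I) * Polynomial.X + Polynomial.C ((((-2 : ℝ) * W ![m3v, lv, m3v, lv] : ℝ) : ℂ) + (((2 : ℝ) * W ![m3v, lv, m2v, lv] : ℝ) : ℂ) * Complex.I)).degree = 4 := by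
        compute_degree!
        intro hh
        exact hC4 (by push_cast at hh ⊢; linear_combination hh)
      rw [hdeg]; norm_num)
    have hroot : ((((-2 : ℝ) * W ![m3v, lv, m3v, lv] : ℝ) : ℂ) + (((2 : ℝ) * W ![m3v, lv, m2v, lv] : ℝ) : ℂ) * Complex.I) + ((((-4 : ℝ) * W ![m3v, m2v, m3v, lv] : ℝ) : ℂ) + (((4 : ℝ) * W ![m3v, m2v, m2v, lv] : ℝ) : ℂ) * Complex.I) * z + ((((-3 : ℝ) * W ![m3v, m2v, m3v, m2v] : ℝ) : ℂ) + (((-3 : ℝ) * W ![m3v, m2v, nv, lv] : ℝ) : ℂ) * Complex.I) * z^2 + ((((2 : ℝ) * W ![m3v, m2v, m3v, nv] : ℝ) : ℂ) + (((2 : ℝ) * W ![m3v, m2v, m2v, nv] : ℝ) : ℂ) * Complex.I) * z^3 + ((((-1/2 : ℝ) * W ![m3v, nv, m3v, nv] : ℝ) : ℂ) + (((-1/2 : ℝ) * W ![m3v, nv, m2v, nv] : ℝ) : ℂ) * Complex.I) * z^4 = 0 := by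
      have h := hzr
      simp only [Polynomial.IsRoot, Polynomial.eval_add, Polynomial.eval_mul,
        Polynomial.eval_pow, Polynomial.eval_C, Polynomial.eval_X] at h
      linear_combination h
    set a : ℝ := z.re with ha
    set b : ℝ := z.im with hb
    have hzz : (a : ℂ) + (b : ℂ) * Complex.I = z := Complex.re_add_im z
    rw [← hzz] at hroot
    have hkey : ((((-2 : ℝ) * W ![m3v, lv, m3v, lv] : ℝ) : ℂ) + (((2 : ℝ) * W ![m3v, lv, m2v, lv] : ℝ) : ℂ) * Complex.I) + ((((-4 : ℝ) * W ![m3v, m2v, m3v, lv] : ℝ) : ℂ) + (((4 : ℝ) * W ![m3v, m2v, m2v, lv] : ℝ) : ℂ) * Complex.I) * ((a : ℂ) + (b : ℂ) * Complex.I) + ((((-3 : ℝ) * W ![m3v, m2v, m3v, m2v] : ℝ) : ℂ) + (((-3 : ℝ) * W ![m3v, m2v, nv, lv] : ℝ) : ℂ) * Complex.I) * ((a : ℂ) + (b : ℂ) * Complex.I)^2 + ((((2 : ℝ) * W ![m3v, m2v, m3v, nv] : ℝ) : ℂ) + (((2 : ℝ) * W ![m3v, m2v, m2v, nv] : ℝ)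 : ℂ) * Complex.I) * ((a : ℂ) + (b : ℂ) * Complex.I)^3 + ((((-1/2 : ℝ) * W ![m3v, nv, m3v, nv] : ℝ) : ℂ) + (((-1/2 : ℝ) * W ![m3v, nv, m2v, nv] : ℝ) : ℂ) * Complex.I) * ((a : ℂ) + (b : ℂ) * Complex.I)^4 =
        ((((-2 : ℝ)) * (W ![m3v, lv, m3v, lv]) + ((-2 : ℝ) * a * b^3 + (2 : ℝ) * a^3 * b) * (W ![m3v, nv, m2v, nv]) + ((-1/2 : ℝ) * b^4 + (3 : ℝ) * a^2 * b^2 + (-1/2 : ℝ) * a^4) * (W ![m3v, nv, m3v, nv]) + ((6 : ℝ) * a * b) * (W ![m3v, m2v, nv, lv]) + ((-4 : ℝ) * b) * (W ![m3v, m2v, m2v, lv]) + ((2 : ℝ) * b^3 + (-6 : ℝ) * a^2 * b) * (W ![m3v, m2v, m2v, nv]) + ((-4 : ℝ) * a) * (W ![m3v, m2v, m3v, lv]) + ((-6 : ℝ) * a * b^2 + (2 : ℝ) * a^3) * (W ![m3v, m2v, m3v, nv]) + ((3 : ℝ) * b^2 + (-3 : ℝ) * a^2) * (W ![m3v, m2v,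 m3v, m2v]) : ℝ) : ℂ) + ((((2 : ℝ)) * (W ![m3v, lv, m2v, lv]) + ((-1/2 : ℝ) * b^4 + (3 : ℝ) * a^2 * b^2 + (-1/2 : ℝ) * a^4) * (W ![m3v, nv, m2v, nv]) + ((2 : ℝ) * a * b^3 + (-2 : ℝ) * a^3 * b) * (W ![m3v, nv, m3v, nv]) + ((3 : ℝ) * b^2 + (-3 : ℝ) * a^2) * (W ![m3v, m2v, nv, lv]) + ((4 : ℝ) * a) * (W ![m3v, m2v, m2v, lv]) + ((-6 : ℝ) * a * b^2 + (2 : ℝ) * a^3) * (W ![m3v, m2v, m2v, nv]) + ((-4 : ℝ) * b) * (W ![m3v, m2v, m3v, lv]) + ((-2 : ℝ) * b^3 + (6 : ℝ) * a^2 * b) * (W ![m3v, m2v, m3v, nv]) + ((-6 : ℝ) * a * b) * (W ![m3v, m2v, m3v, m2v]) : ℝ) : ℂ) * Complex.I := by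
      push_cast
      linear_combination ((4 : ℂ) * b * ((W ![m3v, m2v, m2v, lv] : ℝ) : ℂ) + (-3 : ℂ) * b^2 * ((W ![m3v, m2v, m3v, m2v] : ℝ) : ℂ) + (-3 : ℂ) * b^2 * Complex.I * ((W ![m3v, m2v, nv, lv] : ℝ) : ℂ) + (-2 : ℂ) * b^3 * ((W ![m3v, m2v, m2v, nv] : ℝ) : ℂ) + (2 : ℂ) * b^3 * Complex.I * ((W ![m3v, m2v, m3v, nv] : ℝ) : ℂ) + (2 : ℂ) * b^3 * Complex.I^2 * ((W ![m3v, m2v, m2v, nv] : ℝ) : ℂ) + (1/2 : ℂ) * b^4 * ((W ![m3v, nv, m3v, nv] : ℝ) : ℂ) + (1/2 : ℂ) * b^4 * Complex.I * ((W ![m3v, nv, m2v, nv] : ℝ) : ℂ) + (-1/2 : ℂ) * b^4 * Complex.I^2 * ((W ![m3v, nv, m3v, nv] : ℝ) : ℂ) + (-1/2 : ℂ) * b^4 * Complex.I^3 * ((W ![m3v, nv, m2v, nv] : ℝ) : ℂ) + (-6 : ℂ) * a * b * ((W ![m3v, m2v, nv, lv] : ℝ) : ℂ) + (6 : ℂ)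 * a * b^2 * ((W ![m3v, m2v, m3v, nv] : ℝ) : ℂ) + (6 : ℂ) * a * b^2 * Complex.I * ((W ![m3v, m2v, m2v, nv] : ℝ) : ℂ) + (2 : ℂ) * a * b^3 * ((W ![m3v, nv, m2v, nv] : ℝ) : ℂ) + (-2 : ℂ) * a * b^3 * Complex.I * ((W ![m3v, nv, m3v, nv] : ℝ) : ℂ) + (-2 : ℂ) * a * b^3 * Complex.I^2 * ((W ![m3v, nv, m2v, nv] : ℝ) : ℂ) + (6 : ℂ) * a^2 * b * ((W ![m3v, m2v, m2v, nv] : ℝ) : ℂ) + (-3 : ℂ) * a^2 * b^2 * ((W ![m3v, nv, m3v, nv] : ℝ) : ℂ) + (-3 : ℂ) * a^2 * b^2 * Complex.I * ((W ![m3v, nv, m2v, nv] : ℝ) : ℂ) + (-2 : ℂ) * a^3 * b * ((W ![m3v, nv, m2v, nv] : ℝ) : ℂ)) * Complex.I_sq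
    rw [hkey] at hroot
    obtain ⟨hre, him⟩ := (reim _ _).mp hroot
    have hFmH : W ![kv a b, uv a, kv a b, uv a] - W ![kv a b, vv b, kv a b, vv b] =
        (((-2 : ℝ)) * (W ![m3v, lv, m3v, lv]) + ((-2 : ℝ) * a * b^3 + (2 : ℝ) * a^3 * b) * (W ![m3v, nv, m2v, nv]) + ((-1/2 : ℝ) * b^4 + (3 : ℝ) * a^2 * b^2 + (-1/2 : ℝ) * a^4) * (W ![m3v, nv, m3v, nv]) + ((6 : ℝ) * a * b) * (W ![m3v, m2v, nv, lv]) + ((-4 : ℝ) * b) * (W ![m3v, m2v, m2v, lv]) + ((2 : ℝ) * b^3 + (-6 : ℝ) * a^2 * b) * (W ![m3v, m2v, m2v, nv]) + ((-4 : ℝ) * a) * (W ![m3v, m2v, m3v, lv]) + ((-6 : ℝ) * a * b^2 + (2 : ℝ) * a^3) * (W ![m3v, m2v, m3v, nv]) + ((3 : ℝ) * b^2 + (-3 : ℝ) * a^2) * (W ![m3v, m2v, m3v, m2v]) : ℝ) := by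
      simp only [kv, uv, vv, Wadd0, Wadd1, Wadd2, Wadd3, Wsmul0, Wsmul1, Wsmul2, Wsmul3]
      linear_combination ((2 : ℝ)) * (hA lv lv lv nv) + ((-1/2 : ℝ)) * (hA lv lv m2v m2v) + ((1/2 : ℝ)) * (hA lv lv m3v m3v) + ((-1 : ℝ) * a) * (hA lv lv nv m2v) + ((1 : ℝ) * b) * (hA lv lv nv m3v) + ((-1/2 : ℝ) * b^2 + (1/2 : ℝ) * a^2) * (hA lv lv nv nv) + ((-1 : ℝ)) * (hA lv m2v m2v lv) + ((-2 : ℝ) * a) * (hA lv m2v m2v m2v) + ((1 : ℝ) * b) * (hA lv m2v m2v m3v) + ((-1 : ℝ) * b^2 + (1 : ℝ) * a^2) * (hA lv m2v m2v nv) + ((3 : ℝ) * b) * (hA lv m2v m3v m2v) + ((4 : ℝ) * a) * (hA lv m2v m3v m3v) + ((1 : ℝ)) * (hA lv m3v m3v lv) + ((-2 : ℝ) * a) * (hA lv m3v m3v m2v) + ((2 : ℝ) * b) * (hA lv m3v m3v m3v) + ((-1 : ℝ) * b^2 + (1 : ℝ) * a^2) * (hA lv m3v m3v nv) + ((4 :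 ℝ) * a * b) * (hA lv m3v nv m2v) + ((-2 : ℝ) * a) * (hA lv nv lv m2v) + ((2 : ℝ) * b) * (hA lv nv lv m3v) + ((-1 : ℝ) * b^2 + (1 : ℝ) * a^2) * (hA lv nv lv nv) + ((4 : ℝ) * a * b) * (hA lv nv m2v m3v) + ((-6 : ℝ) * a * b) * (hA lv nv m3v m2v) + ((1/2 : ℝ) * b^2) * (hA m2v m2v m2v m2v) + ((-2 : ℝ) * a * b) * (hA m2v m2v m2v m3v) + ((-1/2 : ℝ) * b^2 + (1 : ℝ) * a^2) * (hA m2v m2v m3v m3v) + ((6 : ℝ) * a) * (hA m2v m3v lv m3v) + ((4 : ℝ) * a) * (hA m2v m3v m3v lv) + ((-1 : ℝ) * b^2 + (2 : ℝ) * a^2) * (hA m2v m3v m3v m2v) + ((5 : ℝ) * a * b^2 + (-2 : ℝ) * a^3) * (hA m2v m3v m3v nv) + ((10 : ℝ) * a * b^2 + (-3 : ℝ) * a^3) * (hA m2v m3v nv m3v) + ((-1/2 : ℝ) * a^2) * (hA m3v m3v m3v m3v) + ((1 : ℝ) * b^2 + (-1 : ℝ) * a^2) * (hA nv m2v lv m2v)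 + ((-2 : ℝ) * a * b) * (hA nv m2v lv m3v) + ((-3 : ℝ) * a * b^2 + (-1 : ℝ) * a^3) * (hA nv m2v m2v m2v) + ((-1/2 : ℝ) * b^3 + (3 : ℝ) * a^2 * b) * (hA nv m2v m2v m3v) + ((-1/4 : ℝ) * b^4 + (1/2 : ℝ) * a^2 * b^2 + (3/4 : ℝ) * a^4) * (hA nv m2v m2v nv) + ((-3/2 : ℝ) * b^3 + (1 : ℝ) * a^2 * b) * (hA nv m2v m3v m2v) + ((6 : ℝ) * a * b^2 + (-2 : ℝ) * a^3) * (hA nv m2v m3v m3v) + ((-1 : ℝ) * a * b^3 + (1 : ℝ) * a^3 * b) * (hA nv m2v m3v nv) + ((1/2 : ℝ) * a^2 * b^2 + (1/2 : ℝ) * a^4) * (hA nv m2v nv m2v) + ((-1/2 : ℝ) * a * b^3 + (-1/2 : ℝ) * a^3 * b) * (hA nv m2v nv m3v) + ((1 : ℝ) * b^2 + (-1 : ℝ) * a^2) * (hA nv m3v lv m3v) + ((-1 : ℝ) * a^2 * b) * (hA nv m3v m2v m2v) + ((1 : ℝ) * a * b^2) * (hA nv m3v m2v m3v) + ((1 :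 ℝ) * a * b^3 + (-1 : ℝ) * a^3 * b) * (hA nv m3v m2v nv) + ((-4 : ℝ) * a * b^2 + (1 : ℝ) * a^3) * (hA nv m3v m3v m2v) + ((1 : ℝ) * b^3 + (3 : ℝ) * a^2 * b) * (hA nv m3v m3v m3v) + ((-3/4 : ℝ) * b^4 + (-1/2 : ℝ) * a^2 * b^2 + (1/4 : ℝ) * a^4) * (hA nv m3v m3v nv) + ((-1/2 : ℝ) * b^4 + (-1/2 : ℝ) * a^2 * b^2) * (hA nv m3v nv m3v) + ((-1/8 : ℝ) * b^4 + (1/2 : ℝ) * a^2 * b^2 + (5/8 : ℝ) * a^4) * (hA nv nv m2v m2v) + ((-3/2 : ℝ) * a * b^3 + (-1/2 : ℝ) * a^3 * b) * (hA nv nv m2v m3v) + ((5/4 : ℝ) * a * b^3 + (1/4 : ℝ) * a^3 * b) * (hA nv nv m3v m2v) + ((-5/8 : ℝ) * b^4 + (-1/2 : ℝ) * a^2 * b^2 + (1/8 : ℝ) * a^4) * (hA nv nv m3v m3v) + ((-5/4 : ℝ) * a * b^4 + (-1/2 : ℝ) * a^3 * b^2 + (3/4 : ℝ) * a^5) * (hA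 nv nv nv m2v) + ((-3/4 : ℝ) * b^5 + (1/2 : ℝ) * a^2 * b^3 + (5/4 : ℝ) * a^4 * b) * (hA nv nv nv m3v) + ((-1/8 : ℝ) * b^6 + (-1/8 : ℝ) * a^2 * b^4 + (1/8 : ℝ) * a^4 * b^2 + (1/8 : ℝ) * a^6) * (hA nv nv nv nv) + ((-2 : ℝ)) * (hB lv lv lv nv) + ((1 : ℝ)) * (hB lv lv m2v m2v) + ((-1 : ℝ)) * (hB lv lv m3v m3v) + ((4/3 : ℝ) * a) * (hB lv m2v m2v m2v) + ((-1 : ℝ) * b) * (hB lv m2v m2v m3v) + ((-4 : ℝ) * a) * (hB lv m2v m3v m3v) + ((-4/3 : ℝ) * b) * (hB lv m3v m3v m3v) + ((-2 : ℝ) * a^2) * (hB lv nv m2v m2v) + ((-2 : ℝ) * a * b) * (hB lv nv m2v m3v) + ((4 : ℝ) * a * b) * (hB lv nv m3v m2v) + ((2 : ℝ) * b^2) * (hB lv nv m3v m3v) + ((-2 : ℝ) * a * b^2 + (2 : ℝ) * a^3) * (hB lv nv nv m2v) + ((-2 : ℝ) * b^3 + (2 : ℝ) * a^2 * b) * (hB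 lv nv nv m3v) + ((1/6 : ℝ) * b^4 + (1 : ℝ) * a^2 * b^2 + (-1/2 : ℝ) * a^4) * (hB lv nv nv nv) + ((1 : ℝ) * b) * (hB m2v lv m3v m2v) + ((-4 : ℝ) * a) * (hB m2v lv m3v m3v) + ((2 : ℝ) * a * b) * (hB m2v m2v m2v m3v) + ((1 : ℝ) * b^2 + (-2 : ℝ) * a^2) * (hB m2v m2v m3v m3v) + ((-2/3 : ℝ) * a * b) * (hB m2v m3v m3v m3v) + ((-1 : ℝ) * a^2 * b) * (hB m2v nv m2v m3v) + ((-1/2 : ℝ) * b^3 + (3 : ℝ) * a^2 * b) * (hB m2v nv m3v m2v) + ((-4 : ℝ) * a * b^2 + (2 : ℝ) * a^3) * (hB m2v nv m3v m3v) + ((-4 : ℝ) * a * b) * (hB nv lv m2v m3v) + ((2/3 : ℝ) * a * b^2) * (hB nv m2v m2v m2v) + ((1/2 : ℝ) * b^3 + (-2 : ℝ) * a^2 * b) * (hB nv m2v m2v m3v) + ((-6 : ℝ) * a * b^2 + (2 : ℝ) * a^3) * (hB nv m2v m3v m3v) + ((-2/3 : ℝ) * a^2 * b) * (hB nv m3v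 m3v m3v) + ((1/4 : ℝ) * b^4 + (-1/4 : ℝ) * a^4) * (hB nv nv m2v m2v) + ((2 : ℝ) * a * b^3) * (hB nv nv m2v m3v) + ((-3/2 : ℝ) * a * b^3 + (1/2 : ℝ) * a^3 * b) * (hB nv nv m3v m2v) + ((1/4 : ℝ) * b^4 + (-1/4 : ℝ) * a^4) * (hB nv nv m3v m3v) + ((1 : ℝ) * a * b^4 + (-1 : ℝ) * a^5) * (hB nv nv nv m2v) + ((1 : ℝ) * b^5 + (-1 : ℝ) * a^4 * b) * (hB nv nv nv m3v) + ((2 : ℝ)) * (hP lv lv lv nv) + ((-1 : ℝ)) * (hP lv lv nv lv) + ((1 : ℝ) * a) * (hP lv m2v m2v m2v) + ((-1 : ℝ) * b^2) * (hP lv m2v m2v nv) + ((1 : ℝ) * b) * (hP lv m2v m3v m2v) + ((-1 : ℝ) * a * b) * (hP lv m2v m3v nv) + ((-1/2 : ℝ) * b^2 + (-1/2 : ℝ) * a^2) * (hP lv m2v nv m2v) + ((4 : ℝ) * a * b) * (hP lv m2v nv m3v) + ((-5/2 : ℝ) * a * b^2 + (3/2 : ℝ) * a^3) * (hP lv m2v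 nv nv) + ((-1 : ℝ) * b) * (hP lv m3v m2v m2v) + ((-3 : ℝ) * a) * (hP lv m3v m2v m3v) + ((3 : ℝ) * a * b) * (hP lv m3v m2v nv) + ((-6 : ℝ) * a) * (hP lv m3v m3v m2v) + ((-1 : ℝ) * b) * (hP lv m3v m3v m3v) + ((1 : ℝ) * a^2) * (hP lv m3v m3v nv) + ((2 : ℝ) * a * b) * (hP lv m3v nv m2v) + ((1/2 : ℝ) * b^2 + (1/2 : ℝ) * a^2) * (hP lv m3v nv m3v) + ((-3/2 : ℝ) * b^3 + (5/2 : ℝ) * a^2 * b) * (hP lv m3v nv nv) + ((-1 : ℝ) * a) * (hP lv nv lv m2v) + ((1 : ℝ) * b) * (hP lv nv lv m3v) + ((-1 : ℝ) * a^2) * (hP lv nv m2v m2v) + ((1 : ℝ) * a * b) * (hP lv nv m2v m3v) + ((-1 : ℝ) * a * b^2 + (1 : ℝ) * a^3) * (hP lv nv m2v nv) + ((-1 : ℝ) * a * b) * (hP lv nv m3v m2v) + ((1 : ℝ) * b^2) * (hP lv nv m3v m3v) + ((-1 : ℝ) * b^3 + (1 : ℝ) * a^2 * b) * (hP lv nv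 m3v nv) + ((1/2 : ℝ) * a * b^2 + (1/2 : ℝ) * a^3) * (hP lv nv nv m2v) + ((-1/2 : ℝ) * b^3 + (-1/2 : ℝ) * a^2 * b) * (hP lv nv nv m3v) + ((1/4 : ℝ) * b^4 + (3/2 : ℝ) * a^2 * b^2 + (-3/4 : ℝ) * a^4) * (hP lv nv nv nv) + ((-1 : ℝ) * b) * (hP m2v lv m2v m3v) + ((4 : ℝ) * b) * (hP m2v lv m3v m2v) + ((-2 : ℝ) * a * b) * (hP m2v m2v m2v m3v) + ((1 : ℝ) * a * b) * (hP m2v m2v m3v m2v) + ((-1 : ℝ) * a * b) * (hP m2v m3v m3v m3v) + ((-1 : ℝ) * a^3) * (hP m2v nv m2v m2v) + ((1/2 : ℝ) * b^3 + (-2 : ℝ) * a^2 * b) * (hP m2v nv m2v m3v) + ((-2 : ℝ) * b^3 + (5 : ℝ) * a^2 * b) * (hP m2v nv m3v m2v) + ((1 : ℝ) * a * b^2) * (hP m2v nv m3v m3v) + ((1 : ℝ) * b^3) * (hP m3v nv m3v m3v) + ((-6 : ℝ) * a * b) * (hP nv lv m3v m2v) + ((-1/2 : ℝ) * a * b^2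 + (-1/2 : ℝ) * a^3) * (hP nv m2v m2v m2v) + ((1 : ℝ) * a^2 * b) * (hP nv m2v m2v m3v) + ((-4 : ℝ) * a * b) * (hP nv m2v m3v lv) + ((-1/2 : ℝ) * b^3 + (-1/2 : ℝ) * a^2 * b) * (hP nv m2v m3v m2v) + ((1/2 : ℝ) * a * b^3 + (1/2 : ℝ) * a^3 * b) * (hP nv m2v m3v nv) + ((-2 : ℝ) * a * b^3) * (hP nv m2v nv m3v) + ((1/2 : ℝ) * b^3 + (-3 : ℝ) * a^2 * b) * (hP nv m3v m2v m2v) + ((-11/2 : ℝ) * a * b^2 + (3/2 : ℝ) * a^3) * (hP nv m3v m2v m3v) + ((-10 : ℝ) * a * b^2 + (3 : ℝ) * a^3) * (hP nv m3v m3v m2v) + ((1/2 : ℝ) * b^3 + (1/2 : ℝ) * a^2 * b) * (hP nv m3v m3v m3v) + ((1/2 : ℝ) * a^2 * b^2 + (1/2 : ℝ) * a^4) * (hP nv nv m2v m2v) + ((-1/2 : ℝ) * a * b^3 + (-1/2 : ℝ) * a^3 * b) * (hP nv nv m2v m3v) + ((1/2 : ℝ) * a * b^4 + (-1/2 : ℝ)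 * a^5) * (hP nv nv m2v nv) + ((1/2 : ℝ) * a * b^3 + (1/2 : ℝ) * a^3 * b) * (hP nv nv m3v m2v) + ((-1/2 : ℝ) * b^4 + (-1/2 : ℝ) * a^2 * b^2) * (hP nv nv m3v m3v) + ((1/2 : ℝ) * b^5 + (-1/2 : ℝ) * a^4 * b) * (hP nv nv m3v nv) + ((-5/4 : ℝ) * a * b^4 + (-1/2 : ℝ) * a^3 * b^2 + (3/4 : ℝ) * a^5) * (hP nv nv nv m2v) + ((-3/4 : ℝ) * b^5 + (1/2 : ℝ) * a^2 * b^3 + (5/4 : ℝ) * a^4 * b) * (hP nv nv nv m3v) + ((1 : ℝ)) * (hT lv lv) + ((2 : ℝ) * a) * (hT lv m2v) + ((-2 : ℝ) * b) * (hT lv m3v) + ((1 : ℝ) * b^2 + (-1 : ℝ) * a^2) * (hT lv nv) + ((-1 : ℝ) * b^2 + (1 : ℝ) * a^2) * (hT m2v m2v) + ((-1 : ℝ) * b^2 + (1 : ℝ) * a^2) * (hT m3v m3v) + ((3 : ℝ) * a * b^2 + (-1 : ℝ) * a^3) * (hT nv m2v) + ((1 : ℝ) * b^3 + (-3 : ℝ)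 * a^2 * b) * (hT nv m3v) + ((1/4 : ℝ) * b^4 + (-3/2 : ℝ) * a^2 * b^2 + (1/4 : ℝ) * a^4) * (hT nv nv)
    have h2G : 2 * W ![kv a b, uv a, kv a b, vv b] = (((2 : ℝ)) * (W ![m3v, lv, m2v, lv]) + ((-1/2 : ℝ) * b^4 + (3 : ℝ) * a^2 * b^2 + (-1/2 : ℝ) * a^4) * (W ![m3v, nv, m2v, nv]) + ((2 : ℝ) * a * b^3 + (-2 : ℝ) * a^3 * b) * (W ![m3v, nv, m3v, nv]) + ((3 : ℝ) * b^2 + (-3 : ℝ) * a^2) * (W ![m3v, m2v, nv, lv]) + ((4 : ℝ) * a) * (W ![m3v, m2v, m2v, lv]) + ((-6 : ℝ) * a * b^2 + (2 : ℝ) * a^3) * (W ![m3v, m2v, m2v, nv]) + ((-4 : ℝ) * b) * (W ![m3v, m2v, m3v, lv]) + ((-2 : ℝ) * b^3 + (6 : ℝ) * a^2 * b) * (W ![m3v, m2v, m3v, nv]) + ((-6 : ℝ) * a * b) * (W ![m3v, m2v, m3v, m2v]) : ℝ) := by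
      simp only [kv, uv, vv, Wadd0, Wadd1, Wadd2, Wadd3, Wsmul0, Wsmul1, Wsmul2, Wsmul3]
      linear_combination ((-1 : ℝ)) * (hA lv lv m3v m2v) + ((-1 : ℝ) * b) * (hA lv lv nv m2v) + ((-1 : ℝ) * a) * (hA lv lv nv m3v) + ((1 : ℝ) * a * b) * (hA lv lv nv nv) + ((-2 : ℝ) * b) * (hA lv m2v m2v m2v) + ((-1 : ℝ) * a) * (hA lv m2v m2v m3v) + ((2 : ℝ) * a * b) * (hA lv m2v m2v nv) + ((-3 : ℝ) * a) * (hA lv m2v m3v m2v) + ((4 : ℝ) * b) * (hA lv m2v m3v m3v) + ((-2 : ℝ)) * (hA lv m3v m2v lv) + ((-2 : ℝ) * b) * (hA lv m3v m3v m2v) + ((-2 : ℝ) * a) * (hA lv m3v m3v m3v) + ((2 : ℝ) * a * b) * (hA lv m3v m3v nv) + ((2 : ℝ) * b^2 + (-2 : ℝ) * a^2) * (hA lv m3v nv m2v) + ((-2 : ℝ) * b) * (hA lv nv lv m2v) + ((-2 : ℝ) * a) * (hA lv nv lv m3v) + ((2 : ℝ) * a * b) * (hA lv nv lv nv) + ((2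 : ℝ) * b^2 + (-2 : ℝ) * a^2) * (hA lv nv m2v m3v) + ((-3 : ℝ) * b^2 + (3 : ℝ) * a^2) * (hA lv nv m3v m2v) + ((-1 : ℝ) * a * b) * (hA m2v m2v m2v m2v) + ((1 : ℝ) * a^2) * (hA m2v m2v m2v m3v) + ((3 : ℝ) * a * b) * (hA m2v m2v m3v m3v) + ((6 : ℝ) * b) * (hA m2v m3v lv m3v) + ((2 : ℝ) * a * b) * (hA m2v m3v m2v m3v) + ((4 : ℝ) * b) * (hA m2v m3v m3v lv) + ((4 : ℝ) * a * b) * (hA m2v m3v m3v m2v) + ((2 : ℝ) * b^2) * (hA m2v m3v m3v m3v) + ((-6 : ℝ) * a^2 * b) * (hA m2v m3v m3v nv) + ((1 : ℝ) * b^3 + (-11 : ℝ) * a^2 * b) * (hA m2v m3v nv m3v) + ((-1 : ℝ) * a * b) * (hA m3v m3v m3v m3v) + ((-2 : ℝ) * a * b) * (hA nv m2v lv m2v) + ((-1 : ℝ) * b^2 + (1 : ℝ) * a^2) * (hA nv m2v lv m3v) + ((-1 : ℝ) * b^3 + (1 : ℝ) * a^2 * b) * (hA nv m2v m2v m2v)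 + ((7/2 : ℝ) * a * b^2 + (-3/2 : ℝ) * a^3) * (hA nv m2v m2v m3v) + ((1 : ℝ) * a * b^3 + (1 : ℝ) * a^3 * b) * (hA nv m2v m2v nv) + ((5/2 : ℝ) * a * b^2 + (-1/2 : ℝ) * a^3) * (hA nv m2v m3v m2v) + ((-8 : ℝ) * a^2 * b) * (hA nv m2v m3v m3v) + ((2 : ℝ) * a^2 * b^2) * (hA nv m2v m3v nv) + ((1 : ℝ) * a^2 * b^2 + (1 : ℝ) * a^4) * (hA nv m2v nv m3v) + ((-2 : ℝ) * a * b) * (hA nv m3v lv m3v) + ((-2 : ℝ) * a^2 * b) * (hA nv m3v m2v m3v) + ((1/2 : ℝ) * b^4 + (-1 : ℝ) * a^2 * b^2 + (1/2 : ℝ) * a^4) * (hA nv m3v m2v nv) + ((-1 : ℝ) * b^3 + (3 : ℝ) * a^2 * b) * (hA nv m3v m3v m2v) + ((1 : ℝ) * a * b^2 + (-1 : ℝ) * a^3) * (hA nv m3v m3v m3v) + ((1 : ℝ) * a * b^3 + (1 : ℝ) * a^3 * b) * (hA nv m3v m3v nv) + ((1 : ℝ) * a * b^3 + (1 : ℝ)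 * a^3 * b) * (hA nv m3v nv m3v) + ((1/2 : ℝ) * a * b^3 + (1/2 : ℝ) * a^3 * b) * (hA nv nv m2v m2v) + ((-1/2 : ℝ) * b^4 + (1 : ℝ) * a^2 * b^2 + (1/2 : ℝ) * a^4) * (hA nv nv m2v m3v) + ((3/4 : ℝ) * b^4 + (1/4 : ℝ) * a^4) * (hA nv nv m3v m2v) + ((1 : ℝ) * a * b^3 + (1 : ℝ) * a^3 * b) * (hA nv nv m3v m3v) + ((-1/4 : ℝ) * b^5 + (3/2 : ℝ) * a^2 * b^3 + (7/4 : ℝ) * a^4 * b) * (hA nv nv nv m2v) + ((7/4 : ℝ) * a * b^4 + (3/2 : ℝ) * a^3 * b^2 + (-1/4 : ℝ) * a^5) * (hA nv nv nv m3v) + ((1/4 : ℝ) * a * b^5 + (1/2 : ℝ) * a^3 * b^3 + (1/4 : ℝ) * a^5 * b) * (hA nv nv nv nv) + ((2 : ℝ)) * (hB lv lv m3v m2v) + ((2/3 : ℝ) * b) * (hB lv m2v m2v m2v) + ((3 : ℝ) * a) * (hB lv m2v m2v m3v) + ((-2 : ℝ) * b) * (hB lv m2v m3v m3v) + ((2/3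 : ℝ) * a) * (hB lv m3v m3v m3v) + ((-2 : ℝ) * a * b) * (hB lv nv m2v m2v) + ((-2 : ℝ) * b^2) * (hB lv nv m2v m3v) + ((1 : ℝ) * b^2 + (-3 : ℝ) * a^2) * (hB lv nv m3v m2v) + ((-2 : ℝ) * a * b) * (hB lv nv m3v m3v) + ((4 : ℝ) * a^2 * b) * (hB lv nv nv m2v) + ((4 : ℝ) * a * b^2) * (hB lv nv nv m3v) + ((-4/3 : ℝ) * a^3 * b) * (hB lv nv nv nv) + ((-1 : ℝ) * a) * (hB m2v lv m3v m2v) + ((-4 : ℝ) * b) * (hB m2v lv m3v m3v) + ((-4 : ℝ) * a * b) * (hB m2v m2v m3v m3v) + ((-2/3 : ℝ) * b^2) * (hB m2v m3v m3v m3v) + ((-2 : ℝ) * a * b^2) * (hB m2v nv m2v m3v) + ((3/2 : ℝ) * a * b^2 + (-3/2 : ℝ) * a^3) * (hB m2v nv m3v m2v) + ((6 : ℝ) * a^2 * b) * (hB m2v nv m3v m3v) + ((-2 : ℝ) * b^2 + (2 : ℝ) * a^2) * (hB nv lv m2v m3v) + ((1/3 : ℝ) * b^3 + (-1/3 : ℝ)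 * a^2 * b) * (hB nv m2v m2v m2v) + ((-5/2 : ℝ) * a * b^2 + (1/2 : ℝ) * a^3) * (hB nv m2v m2v m3v) + ((-1 : ℝ) * b^3 + (7 : ℝ) * a^2 * b) * (hB nv m2v m3v m3v) + ((-1/3 : ℝ) * a * b^2 + (1/3 : ℝ) * a^3) * (hB nv m3v m3v m3v) + ((1 : ℝ) * b^4 + (-1 : ℝ) * a^2 * b^2) * (hB nv nv m2v m3v) + ((-1/2 : ℝ) * b^4 + (1 : ℝ) * a^2 * b^2 + (-1/2 : ℝ) * a^4) * (hB nv nv m3v m2v) + ((-1 : ℝ) * a * b^3 + (-1 : ℝ) * a^3 * b) * (hB nv nv m3v m3v) + ((-2 : ℝ) * a^2 * b^3 + (-2 : ℝ) * a^4 * b) * (hB nv nv nv m2v) + ((-2 : ℝ) * a * b^4 + (-2 : ℝ) * a^3 * b^2) * (hB nv nv nv m3v) + ((2 : ℝ) * a * b) * (hP lv m2v m2v nv) + ((2 : ℝ) * b^2 + (-2 : ℝ) * a^2) * (hP lv m2v nv m3v) + ((-1 : ℝ) * b^3 + (3 : ℝ) * a^2 * b) * (hP lv m2v nv nv) + ((3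 : ℝ) * a) * (hP lv m3v m2v m2v) + ((-2 : ℝ) * b) * (hP lv m3v m2v m3v) + ((1 : ℝ) * b^2 + (-3 : ℝ) * a^2) * (hP lv m3v m2v nv) + ((-4 : ℝ) * b) * (hP lv m3v m3v m2v) + ((-2 : ℝ) * a^2) * (hP lv m3v nv m2v) + ((4 : ℝ) * a * b^2) * (hP lv m3v nv nv) + ((-2 : ℝ) * b) * (hP lv nv lv m2v) + ((-2 : ℝ) * a * b) * (hP lv nv m2v m2v) + ((2 : ℝ) * a^2 * b) * (hP lv nv m2v nv) + ((-2 : ℝ) * b^2) * (hP lv nv m3v m2v) + ((2 : ℝ) * a * b^2) * (hP lv nv m3v nv) + ((1 : ℝ) * b^3 + (1 : ℝ) * a^2 * b) * (hP lv nv nv m2v) + ((-2 : ℝ) * a^3 * b) * (hP lv nv nv nv) + ((1 : ℝ) * a) * (hP m2v lv m2v m3v) + ((-4 : ℝ) * a) * (hP m2v lv m3v m2v) + ((-2 : ℝ) * a^2 * b) * (hP m2v nv m2v m2v) + ((-3/2 : ℝ) * a * b^2 + (3/2 : ℝ) * a^3) * (hP m2v nv m2v m3v) + ((4 : ℝ)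 * a * b^2 + (-2 : ℝ) * a^3) * (hP m2v nv m3v m2v) + ((-3 : ℝ) * b^2 + (3 : ℝ) * a^2) * (hP nv lv m3v m2v) + ((2 : ℝ) * a * b^2) * (hP nv m2v m2v m3v) + ((-2 : ℝ) * b^2 + (2 : ℝ) * a^2) * (hP nv m2v m3v lv) + ((-1 : ℝ) * b^4 + (1 : ℝ) * a^2 * b^2) * (hP nv m2v nv m3v) + ((-5/2 : ℝ) * a * b^2 + (1/2 : ℝ) * a^3) * (hP nv m3v m2v m2v) + ((-1 : ℝ) * b^3 + (5 : ℝ) * a^2 * b) * (hP nv m3v m2v m3v) + ((-2 : ℝ) * b^3 + (10 : ℝ) * a^2 * b) * (hP nv m3v m3v m2v) + ((1 : ℝ) * a * b^3 + (1 : ℝ) * a^3 * b) * (hP nv nv m2v m2v) + ((-1 : ℝ) * a^2 * b^3 + (-1 : ℝ) * a^4 * b) * (hP nv nv m2v nv) + ((1 : ℝ) * b^4 + (1 : ℝ) * a^2 * b^2) * (hP nv nv m3v m2v) + ((-1 : ℝ) * a * b^4 + (-1 : ℝ) * a^3 * b^2) * (hP nv nv m3v nv) + ((-1/2 : ℝ)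 * b^5 + (1 : ℝ) * a^2 * b^3 + (3/2 : ℝ) * a^4 * b) * (hP nv nv nv m2v) + ((2 : ℝ) * a * b^4 + (2 : ℝ) * a^3 * b^2) * (hP nv nv nv m3v) + ((2 : ℝ) * b) * (hT lv m2v) + ((2 : ℝ) * a) * (hT lv m3v) + ((-2 : ℝ) * a * b) * (hT lv nv) + ((2 : ℝ) * a * b) * (hT m2v m2v) + ((2 : ℝ) * a * b) * (hT m3v m3v) + ((1 : ℝ) * b^3 + (-3 : ℝ) * a^2 * b) * (hT nv m2v) + ((-3 : ℝ) * a * b^2 + (1 : ℝ) * a^3) * (hT nv m3v) + ((-1 : ℝ) * a * b^3 + (1 : ℝ) * a^3 * b) * (hT nv nv)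
    have hFpH : W ![kv a b, uv a, kv a b, uv a] + W ![kv a b, vv b, kv a b, vv b] = 0 := by
      simp only [kv, uv, vv, Wadd0, Wadd1, Wadd2, Wadd3, Wsmul0, Wsmul1, Wsmul2, Wsmul3]
      linear_combination ((2 : ℝ)) * (hA lv lv lv nv) + ((-1/2 : ℝ)) * (hA lv lv m2v m2v) + ((-1/2 : ℝ)) * (hA lv lv m3v m3v) + ((-1 : ℝ) * a) * (hA lv lv nv m2v) + ((-1 : ℝ) * b) * (hA lv lv nv m3v) + ((1/2 : ℝ) * b^2 + (1/2 : ℝ) * a^2) * (hA lv lv nv nv) + ((-1 : ℝ)) * (hA lv m2v m2v lv) + ((-2 : ℝ) * a) * (hA lv m2v m2v m2v) + ((-1 : ℝ) * b) * (hA lv m2v m2v m3v) + ((1 : ℝ) * b^2 + (1 : ℝ) * a^2) * (hA lv m2v m2v nv) + ((1 : ℝ) * b) * (hA lv m2v m3v m2v) + ((-1 : ℝ)) * (hA lv m3v m3v lv) + ((-2 : ℝ) * a) * (hA lv m3v m3v m2v) + ((-2 : ℝ) * b) * (hA lv m3v m3v m3v) + ((1 : ℝ) * b^2 + (1 : ℝ)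 * a^2) * (hA lv m3v m3v nv) + ((-2 : ℝ) * a) * (hA lv nv lv m2v) + ((-2 : ℝ) * b) * (hA lv nv lv m3v) + ((1 : ℝ) * b^2 + (1 : ℝ) * a^2) * (hA lv nv lv nv) + ((-3 : ℝ) * a * b) * (hA m2v m2v m2v m3v) + ((1/2 : ℝ) * b^2 + (-1/2 : ℝ) * a^2) * (hA m2v m2v m3v m3v) + ((2 : ℝ) * a) * (hA m2v m3v lv m3v) + ((1 : ℝ) * b^2 + (-1 : ℝ) * a^2) * (hA m2v m3v m3v m2v) + ((-2 : ℝ) * a * b) * (hA m2v m3v m3v m3v) + ((-1 : ℝ) * a * b^2) * (hA m2v m3v m3v nv) + ((-2 : ℝ) * a * b^2 + (-1 : ℝ) * a^3) * (hA m2v m3v nv m3v) + ((-1 : ℝ) * b^2 + (-1 : ℝ) * a^2) * (hA nv m2v lv m2v) + ((1 : ℝ) * a * b^2 + (-1 : ℝ) * a^3) * (hA nv m2v m2v m2v) + ((1/2 : ℝ) * b^3) * (hA nv m2v m2v m3v) + ((-1/4 : ℝ) * b^4 + (1/2 : ℝ) * a^2 * b^2 + (3/4 : ℝ) * a^4) *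 (hA nv m2v m2v nv) + ((-1/2 : ℝ) * b^3 + (-2 : ℝ) * a^2 * b) * (hA nv m2v m3v m2v) + ((-2 : ℝ) * a * b^2) * (hA nv m2v m3v m3v) + ((1 : ℝ) * a * b^3 + (1 : ℝ) * a^3 * b) * (hA nv m2v m3v nv) + ((1/2 : ℝ) * a^2 * b^2 + (1/2 : ℝ) * a^4) * (hA nv m2v nv m2v) + ((1/2 : ℝ) * a * b^3 + (1/2 : ℝ) * a^3 * b) * (hA nv m2v nv m3v) + ((-1 : ℝ) * b^2 + (-1 : ℝ) * a^2) * (hA nv m3v lv m3v) + ((-1 : ℝ) * a^2 * b) * (hA nv m3v m2v m2v) + ((-1 : ℝ) * a * b^2) * (hA nv m3v m2v m3v) + ((1 : ℝ) * a * b^3 + (1 : ℝ) * a^3 * b) * (hA nv m3v m2v nv) + ((1 : ℝ) * a^3) * (hA nv m3v m3v m2v) + ((-1 : ℝ) * b^3 + (1 : ℝ) * a^2 * b) * (hA nv m3v m3v m3v) + ((3/4 : ℝ) * b^4 + (1/2 : ℝ) * a^2 * b^2 + (-1/4 : ℝ) * a^4) * (hA nv m3v m3v nv) + ((1/2 : ℝ)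 * b^4 + (1/2 : ℝ) * a^2 * b^2) * (hA nv m3v nv m3v) + ((-1/8 : ℝ) * b^4 + (1/2 : ℝ) * a^2 * b^2 + (5/8 : ℝ) * a^4) * (hA nv nv m2v m2v) + ((1/2 : ℝ) * a * b^3 + (1/2 : ℝ) * a^3 * b) * (hA nv nv m2v m3v) + ((3/4 : ℝ) * a * b^3 + (3/4 : ℝ) * a^3 * b) * (hA nv nv m3v m2v) + ((5/8 : ℝ) * b^4 + (1/2 : ℝ) * a^2 * b^2 + (-1/8 : ℝ) * a^4) * (hA nv nv m3v m3v) + ((3/4 : ℝ) * a * b^4 + (3/2 : ℝ) * a^3 * b^2 + (3/4 : ℝ) * a^5) * (hA nv nv nv m2v) + ((3/4 : ℝ) * b^5 + (3/2 : ℝ) * a^2 * b^3 + (3/4 : ℝ) * a^4 * b) * (hA nv nv nv m3v) + ((1/8 : ℝ) * b^6 + (3/8 : ℝ) * a^2 * b^4 + (3/8 : ℝ) * a^4 * b^2 + (1/8 : ℝ) * a^6) * (hA nv nv nv nv) + ((-2 : ℝ)) * (hB lv lv lv nv) + ((1 : ℝ)) * (hB lv lv m2v m2v) + ((1 : ℝ))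 * (hB lv lv m3v m3v) + ((4/3 : ℝ) * a) * (hB lv m2v m2v m2v) + ((1 : ℝ) * b) * (hB lv m2v m2v m3v) + ((4/3 : ℝ) * b) * (hB lv m3v m3v m3v) + ((-2 : ℝ) * a^2) * (hB lv nv m2v m2v) + ((-2 : ℝ) * a * b) * (hB lv nv m2v m3v) + ((-2 : ℝ) * a * b) * (hB lv nv m3v m2v) + ((-2 : ℝ) * b^2) * (hB lv nv m3v m3v) + ((2 : ℝ) * a * b^2 + (2 : ℝ) * a^3) * (hB lv nv nv m2v) + ((2 : ℝ) * b^3 + (2 : ℝ) * a^2 * b) * (hB lv nv nv m3v) + ((-1/2 : ℝ) * b^4 + (-1 : ℝ) * a^2 * b^2 + (-1/2 : ℝ) * a^4) * (hB lv nv nv nv) + ((-1 : ℝ) * b) * (hB m2v lv m3v m2v) + ((2 : ℝ) * a * b) * (hB m2v m2v m2v m3v) + ((-1 : ℝ) * b^2 + (1 : ℝ) * a^2) * (hB m2v m2v m3v m3v) + ((4/3 : ℝ) * a * b) * (hB m2v m3v m3v m3v) + ((-1 : ℝ) * a^2 * b) * (hB m2v nv m2v m3v) + ((1/2 : ℝ)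 * b^3) * (hB m2v nv m3v m2v) + ((-2/3 : ℝ) * a * b^2) * (hB nv m2v m2v m2v) + ((-1/2 : ℝ) * b^3 + (1 : ℝ) * a^2 * b) * (hB nv m2v m2v m3v) + ((2 : ℝ) * a * b^2) * (hB nv m2v m3v m3v) + ((-2/3 : ℝ) * a^2 * b) * (hB nv m3v m3v m3v) + ((1/4 : ℝ) * b^4 + (-1/4 : ℝ) * a^4) * (hB nv nv m2v m2v) + ((-1/2 : ℝ) * a * b^3 + (-1/2 : ℝ) * a^3 * b) * (hB nv nv m3v m2v) + ((-1/4 : ℝ) * b^4 + (1/4 : ℝ) * a^4) * (hB nv nv m3v m3v) + ((-1 : ℝ) * a * b^4 + (-2 : ℝ) * a^3 * b^2 + (-1 : ℝ) * a^5) * (hB nv nv nv m2v) + ((-1 : ℝ) * b^5 + (-2 : ℝ) * a^2 * b^3 + (-1 : ℝ) * a^4 * b) * (hB nv nv nv m3v) + ((2 : ℝ)) * (hP lv lv lv nv) + ((-1 : ℝ)) * (hP lv lv nv lv) + ((1 : ℝ) * a) * (hP lv m2v m2v m2v) + ((1 : ℝ) * b^2) * (hP lv m2v m2v nv) + ((1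 : ℝ) * b) * (hP lv m2v m3v m2v) + ((-1 : ℝ) * a * b) * (hP lv m2v m3v nv) + ((1/2 : ℝ) * b^2 + (-1/2 : ℝ) * a^2) * (hP lv m2v nv m2v) + ((3/2 : ℝ) * a * b^2 + (3/2 : ℝ) * a^3) * (hP lv m2v nv nv) + ((1 : ℝ) * b) * (hP lv m3v m2v m2v) + ((-1 : ℝ) * a) * (hP lv m3v m2v m3v) + ((-1 : ℝ) * a * b) * (hP lv m3v m2v nv) + ((-2 : ℝ) * a) * (hP lv m3v m3v m2v) + ((1 : ℝ) * b) * (hP lv m3v m3v m3v) + ((1 : ℝ) * a^2) * (hP lv m3v m3v nv) + ((-2 : ℝ) * a * b) * (hP lv m3v nv m2v) + ((-1/2 : ℝ) * b^2 + (1/2 : ℝ) * a^2) * (hP lv m3v nv m3v) + ((3/2 : ℝ) * b^3 + (3/2 : ℝ) * a^2 * b) * (hP lv m3v nv nv) + ((-1 : ℝ) * a) * (hP lv nv lv m2v) + ((-1 : ℝ) * b) * (hP lv nv lv m3v) + ((-1 : ℝ) * a^2) * (hP lv nv m2v m2v) + ((-1 : ℝ) * a * b) * (hP lv nv m2v m3v)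 + ((1 : ℝ) * a * b^2 + (1 : ℝ) * a^3) * (hP lv nv m2v nv) + ((-1 : ℝ) * a * b) * (hP lv nv m3v m2v) + ((-1 : ℝ) * b^2) * (hP lv nv m3v m3v) + ((1 : ℝ) * b^3 + (1 : ℝ) * a^2 * b) * (hP lv nv m3v nv) + ((1/2 : ℝ) * a * b^2 + (1/2 : ℝ) * a^3) * (hP lv nv nv m2v) + ((1/2 : ℝ) * b^3 + (1/2 : ℝ) * a^2 * b) * (hP lv nv nv m3v) + ((-3/4 : ℝ) * b^4 + (-3/2 : ℝ) * a^2 * b^2 + (-3/4 : ℝ) * a^4) * (hP lv nv nv nv) + ((1 : ℝ) * b) * (hP m2v lv m2v m3v) + ((-2 : ℝ) * a * b) * (hP m2v m2v m2v m3v) + ((1 : ℝ) * a * b) * (hP m2v m2v m3v m2v) + ((1 : ℝ) * a * b) * (hP m2v m3v m3v m3v) + ((-1 : ℝ) * a^3) * (hP m2v nv m2v m2v) + ((-1/2 : ℝ) * b^3 + (-1 : ℝ) * a^2 * b) * (hP m2v nv m2v m3v) + ((-1 : ℝ) * a^2 * b) * (hP m2v nv m3v m2v) + ((-1 : ℝ)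 * a * b^2) * (hP m2v nv m3v m3v) + ((-1 : ℝ) * b^3) * (hP m3v nv m3v m3v) + ((-1/2 : ℝ) * a * b^2 + (-1/2 : ℝ) * a^3) * (hP nv m2v m2v m2v) + ((1 : ℝ) * a^2 * b) * (hP nv m2v m2v m3v) + ((-1/2 : ℝ) * b^3 + (-1/2 : ℝ) * a^2 * b) * (hP nv m2v m3v m2v) + ((1/2 : ℝ) * a * b^3 + (1/2 : ℝ) * a^3 * b) * (hP nv m2v m3v nv) + ((-1/2 : ℝ) * b^3) * (hP nv m3v m2v m2v) + ((3/2 : ℝ) * a * b^2 + (1/2 : ℝ) * a^3) * (hP nv m3v m2v m3v) + ((2 : ℝ) * a * b^2 + (1 : ℝ) * a^3) * (hP nv m3v m3v m2v) + ((-1/2 : ℝ) * b^3 + (-1/2 : ℝ) * a^2 * b) * (hP nv m3v m3v m3v) + ((1/2 : ℝ) * a^2 * b^2 + (1/2 : ℝ) * a^4) * (hP nv nv m2v m2v) + ((1/2 : ℝ) * a * b^3 + (1/2 : ℝ) * a^3 * b) * (hP nv nv m2v m3v) + ((-1/2 : ℝ) * a * b^4 + (-1 : ℝ) * a^3 * b^2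 + (-1/2 : ℝ) * a^5) * (hP nv nv m2v nv) + ((1/2 : ℝ) * a * b^3 + (1/2 : ℝ) * a^3 * b) * (hP nv nv m3v m2v) + ((1/2 : ℝ) * b^4 + (1/2 : ℝ) * a^2 * b^2) * (hP nv nv m3v m3v) + ((-1/2 : ℝ) * b^5 + (-1 : ℝ) * a^2 * b^3 + (-1/2 : ℝ) * a^4 * b) * (hP nv nv m3v nv) + ((3/4 : ℝ) * a * b^4 + (3/2 : ℝ) * a^3 * b^2 + (3/4 : ℝ) * a^5) * (hP nv nv nv m2v) + ((3/4 : ℝ) * b^5 + (3/2 : ℝ) * a^2 * b^3 + (3/4 : ℝ) * a^4 * b) * (hP nv nv nv m3v) + ((1 : ℝ)) * (hT lv lv) + ((2 : ℝ) * a) * (hT lv m2v) + ((2 : ℝ) * b) * (hT lv m3v) + ((-1 : ℝ) * b^2 + (-1 : ℝ) * a^2) * (hT lv nv) + ((1 : ℝ) * a^2) * (hT m2v m2v) + ((2 : ℝ) * a * b) * (hT m2v m3v) + ((1 : ℝ) * b^2) * (hT m3v m3v) + ((-1 : ℝ) * a * b^2 + (-1 : ℝ) * a^3) * (hT nv m2v)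 + ((-1 : ℝ) * b^3 + (-1 : ℝ) * a^2 * b) * (hT nv m3v) + ((1/4 : ℝ) * b^4 + (1/2 : ℝ) * a^2 * b^2 + (1/4 : ℝ) * a^4) * (hT nv nv)
    have hF : W ![kv a b, uv a, kv a b, uv a] = 0 := by linarith
    have hH : W ![kv a b, vv b, kv a b, vv b] = 0 := by linarith
    have hG : W ![kv a b, uv a, kv a b, vv b] = 0 := by linarith
    have hG' : W ![kv a b, vv b, kv a b, uv a] = 0 := by
      linear_combination hG + hP (kv a b) (uv a) (kv a b) (vv b)
    refine ⟨kv a b, ?_, ?_, ?_⟩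
    · intro h
      have h0 := congrFun h 0
      norm_num [kv, lv, nv, m2v, m3v] at h0
      nlinarith [h0, sq_nonneg a, sq_nonneg b]
    · norm_num [eta, kv, lv, nv, m2v, m3v, Fin.sum_univ_four, show ((0:Fin 4):ℕ) = 0 from rfl, show ((1:Fin 4):ℕ) = 1 from rfl,
          show ((2:Fin 4):ℕ) = 2 from rfl, show ((3:Fin 4):ℕ) = 3 from rfl]
      simp
      ring
    · intro x y hx hy
      have hx0 : a * x 2 + b * x 3 =
          (1 + (a^2+b^2)/4) * x 0 - (1 - (a^2+b^2)/4) * x 1 := by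
        have h := hx
        norm_num [eta, kv, lv, nv, m2v, m3v, Fin.sum_univ_four, show ((0:Fin 4):ℕ) = 0 from rfl, show ((1:Fin 4):ℕ) = 1 from rfl,
          show ((2:Fin 4):ℕ) = 2 from rfl, show ((3:Fin 4):ℕ) = 3 from rfl] at h
        simp at h
        linear_combination h
      have hy0 : a * y 2 + b * y 3 =
          (1 + (a^2+b^2)/4) * y 0 - (1 - (a^2+b^2)/4) * y 1 := by
        have h := hy
        norm_num [eta, kv, lv, nv, m2v, m3v, Fin.sum_univ_four, show ((0:Fin 4):ℕ) = 0 from rfl, show ((1:Fin 4):ℕ) = 1 from rfl,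
          show ((2:Fin 4):ℕ) = 2 from rfl, show ((3:Fin 4):ℕ) = 3 from rfl] at h
        simp at h
        linear_combination h
      have hx' : x = ((x 0 + x 1)/2) • kv a b + (x 2 - ((x 0 + x 1)/2)*a) • uv a +
          (x 3 - ((x 0 + x 1)/2)*b) • vv b := by
        funext i
        fin_cases i <;> simp [kv, uv, vv, lv, nv, m2v, m3v] <;>
          first
          | linear_combination (-(1/2 : ℝ)) * hx0
          | linear_combination ((1/2 : ℝ)) * hx0
          | linear_combination (0 : ℝ) * hx0
      have hy' : y = ((y 0 + y 1)/2) • kv a b + (y 2 - ((y 0 + y 1)/2)*a) • uv a +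
          (y 3 - ((y 0 + y 1)/2)*b) • vv b := by
        funext i
        fin_cases i <;> simp [kv, uv, vv, lv, nv, m2v, m3v] <;>
          first
          | linear_combination (-(1/2 : ℝ)) * hy0
          | linear_combination ((1/2 : ℝ)) * hy0
          | linear_combination (0 : ℝ) * hy0
      rw [hx', hy']
      simp only [Wadd1, Wsmul1, Wadd3, Wsmul3]
      linear_combination
        ((x 0 + x 1)/2)*((y 0 + y 1)/2)*(hz12 (kv a b) (kv a b) (kv a b)) +
        ((x 0 + x 1)/2)*(y 2 - ((y 0 + y 1)/2)*a)*(hz12 (kv a b) (kv a b) (uv a)) +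
        ((x 0 + x 1)/2)*(y 3 - ((y 0 + y 1)/2)*b)*(hz12 (kv a b) (kv a b) (vv b)) +
        (x 2 - ((x 0 + x 1)/2)*a)*((y 0 + y 1)/2)*(hz34 (kv a b) (uv a) (kv a b)) +
        (x 3 - ((x 0 + x 1)/2)*b)*((y 0 + y 1)/2)*(hz34 (kv a b) (vv b) (kv a b)) +
        (x 2 - ((x 0 + x 1)/2)*a)*(y 2 - ((y 0 + y 1)/2)*a)*hF +
        (x 2 - ((x 0 + x 1)/2)*a)*(y 3 - ((y 0 + y 1)/2)*b)*hG +
        (x 3 - ((x 0 + x 1)/2)*b)*(y 2 - ((y 0 + y 1)/2)*a)*hG' +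
        (x 3 - ((x 0 + x 1)/2)*b)*(y 3 - ((y 0 + y 1)/2)*b)*hH
end

section
/- Let N ≥ 2, let S and T be p-linear forms on ℝ^N, and fix a null frame (ℓ, n, m_2, …, m_{N−1}). For a multi-index A = (A_1,…,A_p) ∈ {0,…,N−1}^p let Ā be obtained from A by interchanging every index 0 with 1 and fixing all spatial indices. If the sum of the boost orders of S and T with respect to the frame is negative (in particular, if both S and T have negative boost order), then the complete η-contraction vanishes: Σ_A S_{A_1…A_p} T_{Ā_1…Ā_p} = 0. In particular, a Weyl tensor W of boost order ≤ −1 with respect to some null frame (type III, N or O) has vanishing quadratic invariant C_{abcd}C^{abcd} = Σ_A W_{A_1A_2A_3A_4} W_{Ā_1Ā_2Ā_3Ā_4} = 0. -/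
/-- Index conjugation raising/lowering: interchange `0 ↔ 1` (i.e. `ℓ ↔ n`), fixing all
spatial indices.  Since the frame is `η`-null-orthonormal, the complete contraction of
two `p`-linear forms is `S_{A₁…A_p} T^{A₁…A_p} = ∑_A S_{A₁…A_p} T_{Ā₁…Ā_p}`. -/
def conj {N : ℕ} [NeZero N] (A : Fin N) : Fin N :=
  if (A : ℕ) = 0 then 1 else if (A : ℕ) = 1 then 0 else A

lemma bw_conj {N : ℕ} [NeZero N] (hN : 2 ≤ N) (a : Fin N) : bw (conj a) = - bw a := by
  have h1 : ((1 : Fin N) : ℕ) = 1 := by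
    simp [Fin.val_one', Nat.mod_eq_of_lt (by omega : 1 < N)]
  have h0 : ((0 : Fin N) : ℕ) = 0 := rfl
  unfold bw conj
  have hne : N ≠ 1 := by omega
  have hm : 1 % N = 1 := Nat.mod_eq_of_lt (by omega)
  by_cases ha : (a : ℕ) = 0
  · simp [ha, h1, hne, hm]
  · by_cases ha1 : (a : ℕ) = 1
    · simp [ha, ha1, h0]
    · simp [ha, ha1]

/-- If the sum of the boost orders of two `p`-linear forms `S`, `T`
with respect to a null frame is negative, their complete `η`-contraction vanishes:
`∑_A S_{A₁…A_p} T_{Ā₁…Ā_p} = 0`.  In particular, a Weyl tensor of boost order `≤ -1`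
(type **III**, **N** or **O**) has vanishing quadratic invariant `C_{abcd}C^{abcd}`. -/
theorem stmt_15 (N : ℕ) [NeZero N] (hN : 2 ≤ N) :
    (∀ (p : ℕ) (f : Fin N → Fin N → ℝ), IsNullFrame f →
      ∀ S T : MultilinearMap ℝ (fun _ : Fin p => (Fin N → ℝ)) ℝ,
        boostOrder p S f + boostOrder p T f < 0 →
        ∑ A : Fin p → Fin N,
          S (fun k => f (A k)) * T (fun k => f (conj (A k))) = 0) ∧
    (∀ f : Fin N → Fin N → ℝ, IsNullFrame f →
      ∀ W : MultilinearMap ℝ (fun _ : Fin 4 => (Fin N → ℝ)) ℝ, IsWeyl W →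
        boostOrder 4 W f ≤ ((-1 : ℤ) : WithBot ℤ) →
        ∑ A : Fin 4 → Fin N,
          W (fun k => f (A k)) * W (fun k => f (conj (A k))) = 0) := by
  classical
  have main : ∀ (p : ℕ) (f : Fin N → Fin N → ℝ), IsNullFrame f →
      ∀ S T : MultilinearMap ℝ (fun _ : Fin p => (Fin N → ℝ)) ℝ,
        boostOrder p S f + boostOrder p T f < 0 →
        ∑ A : Fin p → Fin N,
          S (fun k => f (A k)) * T (fun k => f (conj (A k))) = 0 := by
    intro p f _ S T hST
    apply Finset.sum_eq_zero
    intro A _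
    by_cases hS : S (fun k => f (A k)) = 0
    · simp [hS]
    by_cases hT : T (fun k => f (conj (A k))) = 0
    · simp [hT]
    exfalso
    have hbS : ((∑ k, bw (A k) : ℤ) : WithBot ℤ) ≤ boostOrder p S f := by
      refine le_trans ?_ (Finset.le_sup (f := fun A : Fin p → Fin N =>
        if S (fun k => f (A k)) = 0 then ⊥ else ((∑ k, bw (A k) : ℤ) : WithBot ℤ))
        (Finset.mem_univ A))
      simp [hS]
    have hbT : ((-(∑ k, bw (A k)) : ℤ) : WithBot ℤ) ≤ boostOrder p T f := by
      have hsum : (∑ k, bw (conj (A k)) : ℤ) = -(∑ k, bw (A k)) := by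
        simp [bw_conj hN, Finset.sum_neg_distrib]
      refine le_trans ?_ (Finset.le_sup (f := fun A : Fin p → Fin N =>
        if T (fun k => f (A k)) = 0 then ⊥ else ((∑ k, bw (A k) : ℤ) : WithBot ℤ))
        (Finset.mem_univ (fun k => conj (A k))))
      simp [hT, hsum]
    have h0 : (0 : WithBot ℤ) ≤ boostOrder p S f + boostOrder p T f := by
      have := add_le_add hbS hbT
      rw [← WithBot.coe_add] at this
      simpa using this
    exact absurd (lt_of_le_of_lt h0 hST) (lt_irrefl _)
  refine ⟨main, ?_⟩
  intro f hf W _ hbo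
  refine main 4 f hf W W (lt_of_le_of_lt (add_le_add hbo hbo) ?_)
  rw [← WithBot.coe_add]
  exact_mod_cast (by norm_num : (-1 + -1 : ℤ) < 0)
end
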